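/- For every instance I over schema S_E, all g ≥ s > 0, and every Boolean MDDLog program Π over EDB schema S_E of diameter at most s, there is an S_E-instance J such that: J → I, the (1,s)-decomposition girth of J exceeds g, and I ⊨ Π iff J ⊨ Π. -/

import Mathlib

namespace DDLogPaper

/-! ### Basic objects: constants, facts, schemas, instances, homomorphisms -/

/-- The fixed countably infinite set of constants. -/
abbrev Const := ℕ
/-- Variables. -/
abbrev Var := ℕ
/-- Relation symbols. -/
abbrev RelSym := ℕ

/-- A fact: a relation symbol applied to a tuple of constants. -/
structure Fact where
  rel : RelSym
  args : List Const
deriving DecidableEq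

/-- A schema: a finite set of relation symbols, each with an arity. -/
structure Schema where
  rels : Finset RelSym
  arity : RelSym → ℕ

/-- An instance is a finite set of facts. -/
abbrev Inst := Finset Fact

/-- `I` is an instance over schema `S`. -/
def Schema.IsInstance (S : Schema) (I : Inst) : Prop :=
  ∀ f ∈ I, f.rel ∈ S.rels ∧ f.args.length = S.arity f.rel

/-- The active domain of an instance. -/
def adom (I : Inst) : Finset Const :=
  I.biUnion (fun f => f.args.toFinset)

/-- `h` is a homomorphism from `I` to `J`. -/
def IsHom (h : Const → Const) (I J : Inst) : Prop :=
  ∀ f ∈ I, (⟨f.rel, f.args.map h⟩ : Fact) ∈ J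

/-- There is a homomorphism from `I` to `J`. -/
def HomTo (I J : Inst) : Prop := ∃ h, IsHom h I J

/-! ### Girth -/

/-- `I` has a cycle of length `n`: distinct facts `f 0, …, f (n-1)` with positions
`p i ≠ p' i` such that the constant of `f i` at position `p' i` equals the constant of
`f (i+1 mod n)` at position `p (i+1 mod n)`. -/
def HasCycleOfLength (I : Inst) (n : ℕ) : Prop :=
  0 < n ∧
  ∃ (f : ℕ → Fact) (p p' : ℕ → ℕ),
    (∀ i < n, f i ∈ I) ∧
    (∀ i j, i < n → j < n → f i = f j → i = j) ∧
    (∀ i < n, p i ≠ p' i ∧ p i < (f i).args.length ∧ p' i < (f i).args.length) ∧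
    (∀ i < n, (f i).args.getD (p' i) 0 = (f ((i + 1) % n)).args.getD (p ((i + 1) % n)) 0)

/-- The girth of `I` exceeds `g` (in particular this holds if `I` has no cycle at all). -/
def GirthGT (I : Inst) (g : ℕ) : Prop :=
  ∀ n ≤ g, ¬ HasCycleOfLength I n

/-! ### Tree decompositions -/

/-- `I` has a tree decomposition with bags of size at most `k`, overlap of distinct bags of
size at most `ℓ`, and such that every bag contains all elements of `params`. -/
def HasTreeDecompWithParams (I : Inst) (params : Finset Const) (ℓ k : ℕ) : Prop :=
  ∃ (V : Type) (T : SimpleGraph V) (B : V → Finset Const),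
    T.IsTree ∧
    (∀ v, B v ⊆ adom I ∪ params) ∧
    (∀ a ∈ adom I, (T.induce {v | a ∈ B v}).Connected) ∧
    (∀ f ∈ I, ∃ v, ∀ c ∈ f.args, c ∈ B v) ∧
    (∀ v, params ⊆ B v) ∧
    (∀ v w, v ≠ w → (B v ∩ B w).card ≤ ℓ) ∧
    (∀ v, (B v).card ≤ k)

/-- `I` has treewidth `(ℓ,k)`: it admits an `(ℓ,k)`-tree decomposition. -/
def HasTreeDecomp (I : Inst) (ℓ k : ℕ) : Prop :=
  HasTreeDecompWithParams I ∅ ℓ k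

/-! ### Terms, atoms, rules, programs -/

/-- A term is a variable or a constant. -/
inductive Term where
  | var : Var → Term
  | const : Const → Term
deriving DecidableEq

def Term.eval (v : Var → Const) : Term → Const
  | .var x => v x
  | .const c => c

def Term.varSet : Term → Finset Var
  | .var x => {x}
  | .const _ => ∅

/-- An atom: a relation symbol applied to a tuple of terms. -/
structure Atom where
  rel : RelSym
  args : List Term
deriving DecidableEq

/-- Apply a valuation to an atom, obtaining a fact. -/
def Atom.app (a : Atom) (v : Var → Const) : Fact :=
  ⟨a.rel, a.args.map (Term.eval v)⟩

def Atom.vars (a : Atom) : Finset Var :=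
  a.args.foldr (fun t s => t.varSet ∪ s) ∅

/-- The atom mentions no constants. -/
def Atom.constFree (a : Atom) : Prop :=
  ∀ t ∈ a.args, ∃ x, t = Term.var x

def Atom.size (a : Atom) : ℕ := 1 + a.args.length

/-- The number of variable occurrences in an atom. -/
def Atom.varOccs (a : Atom) : ℕ :=
  (a.args.filter (fun t => match t with | Term.var _ => true | Term.const _ => false)).length

/-- A (disjunctive) rule: a disjunction of head atoms and a conjunction of body atoms. -/
structure Rule where
  head : List Atom
  body : List Atom
deriving DecidableEq

def Rule.atoms (ρ : Rule) : List Atom := ρ.head ++ ρ.body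

def Rule.vars (ρ : Rule) : Finset Var :=
  ρ.atoms.foldr (fun a s => a.vars ∪ s) ∅

def Rule.bodyVars (ρ : Rule) : Finset Var :=
  ρ.body.foldr (fun a s => a.vars ∪ s) ∅

/-- The rule holds in a set of facts `J` (all variables universally quantified). -/
def Rule.holdsIn (ρ : Rule) (J : Set Fact) : Prop :=
  ∀ v : Var → Const, (∀ a ∈ ρ.body, a.app v ∈ J) → ∃ a ∈ ρ.head, a.app v ∈ J

def Rule.size (ρ : Rule) : ℕ := 1 + (ρ.atoms.map Atom.size).sum

def Rule.bodyVarOccs (ρ : Rule) : ℕ := (ρ.body.map Atom.varOccs).sum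

/-- A disjunctive Datalog program: a finite set of rules together with a selected goal
relation and its arity. -/
structure Program where
  rules : Finset Rule
  goal : RelSym
  goalArity : ℕ

/-- `P.models I t` formalizes `P ∪ I ⊨ goal(t)` (first-order entailment; by Herbrand's
theorem for universal sentences it suffices to quantify over all sets of facts). -/
def Program.models (P : Program) (I : Inst) (t : List Const) : Prop :=
  ∀ J : Set Fact, (I : Set Fact) ⊆ J → (∀ ρ ∈ P.rules, ρ.holdsIn J) →
    (⟨P.goal, t⟩ : Fact) ∈ J

/-- The IDB relations of a program: the relations occurring in some rule head, together
with the goal relation. -/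
def Program.IDB (P : Program) : Finset RelSym :=
  insert P.goal (P.rules.biUnion (fun ρ => (ρ.head.map Atom.rel).toFinset))

/-- `P` is a well-formed disjunctive Datalog program over EDB schema `S`. -/
def Program.IsDDLog (P : Program) (S : Schema) : Prop :=
  (∀ r ∈ P.IDB, r ∉ S.rels) ∧
  ∀ ρ ∈ P.rules,
    ρ.body ≠ [] ∧
    (∀ a ∈ ρ.head, a.vars ⊆ ρ.bodyVars) ∧
    (∀ a ∈ ρ.body, a.rel ≠ P.goal) ∧
    ((∃ a ∈ ρ.head, a.rel = P.goal) → ρ.head.length = 1) ∧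
    (∀ a ∈ ρ.atoms, a.rel = P.goal → a.args.length = P.goalArity) ∧
    (∀ a ∈ ρ.atoms, a.rel ∉ P.IDB → a.rel ∈ S.rels ∧ a.args.length = S.arity a.rel)

/-- Monadic disjunctive Datalog: all IDB relations except possibly goal have arity ≤ 1. -/
def Program.IsMDDLog (P : Program) (S : Schema) : Prop :=
  P.IsDDLog S ∧
  ∀ ρ ∈ P.rules, ∀ a ∈ ρ.atoms, a.rel ∈ P.IDB → a.rel ≠ P.goal → a.args.length ≤ 1

/-- Datalog: every rule head consists of exactly one atom. -/
def Program.IsDatalog (P : Program) (S : Schema) : Prop :=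
  P.IsDDLog S ∧ ∀ ρ ∈ P.rules, ρ.head.length = 1

/-- Monadic Datalog. -/
def Program.IsMDLog (P : Program) (S : Schema) : Prop :=
  P.IsDatalog S ∧
  ∀ ρ ∈ P.rules, ∀ a ∈ ρ.atoms, a.rel ∈ P.IDB → a.rel ≠ P.goal → a.args.length ≤ 1

/-- The program mentions no constants. -/
def Program.constFree (P : Program) : Prop :=
  ∀ ρ ∈ P.rules, ∀ a ∈ ρ.atoms, a.constFree

/-- The size of a program (number of symbols needed to write it). -/
def Program.size (P : Program) : ℕ := ∑ ρ ∈ P.rules, ρ.size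

/-- The diameter: the maximum number of variables occurring in a rule. -/
def Program.diameter (P : Program) : ℕ := P.rules.sup (fun ρ => ρ.vars.card)

/-- The rule size: the maximum number of variable occurrences in a rule body. -/
def Program.ruleSize (P : Program) : ℕ := P.rules.sup Rule.bodyVarOccs

def Atom.widthContrib (P : Program) (a : Atom) : ℕ :=
  if a.rel ∈ P.IDB ∧ a.rel ≠ P.goal then a.args.length else 0

/-- The width: the maximum arity of non-goal IDB relations used in the program. -/
def Program.width (P : Program) : ℕ :=
  P.rules.sup (fun ρ => (ρ.atoms.map (Atom.widthContrib P)).foldr max 0)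

/-- A simple MDDLog program: each rule has at most one EDB atom, which contains all
variables of the rule body, each exactly once; rules without an EDB atom have at most
one variable. -/
def Program.IsSimple (P : Program) : Prop :=
  ∀ ρ ∈ P.rules,
    (∀ a ∈ ρ.body, ∀ b ∈ ρ.body, a.rel ∉ P.IDB → b.rel ∉ P.IDB → a = b) ∧
    (∀ a ∈ ρ.body, a.rel ∉ P.IDB →
      ∃ xs : List Var, a.args = xs.map Term.var ∧ xs.Nodup ∧ xs.toFinset = ρ.bodyVars) ∧
    ((∀ a ∈ ρ.body, a.rel ∈ P.IDB) → ρ.bodyVars.card ≤ 1)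

/-! ### Datalog with parameters -/

/-- An `(ℓ,k)`-Datalog program with `n` parameters: an `n`-ary `(ℓ+n,k+n)`-Datalog program
in which all IDB relations have arity at least `n` and in every rule all IDB atoms
(including goal atoms) agree on the terms in their last `n` positions. -/
def Program.IsParamDatalog (Γ : Program) (S : Schema) (ℓ k n : ℕ) : Prop :=
  Γ.IsDatalog S ∧ Γ.goalArity = n ∧
  Γ.width ≤ ℓ + n ∧ Γ.diameter ≤ k + n ∧
  (∀ ρ ∈ Γ.rules, ∀ a ∈ ρ.atoms, a.rel ∈ Γ.IDB → n ≤ a.args.length) ∧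
  (∀ ρ ∈ Γ.rules, ∃ ys : List Term,
    ∀ a ∈ ρ.atoms, a.rel ∈ Γ.IDB → a.args.drop (a.args.length - n) = ys)

/-! ### Conjunctive queries and unions of conjunctive queries -/

/-- A conjunctive query: answer variables, relational atoms, and equality atoms. -/
structure CQ where
  answers : List Var
  atoms : List Atom
  eqs : List (Var × Var)

/-- The CQ only uses relations from schema `S` (with correct arities) and no constants. -/
def CQ.over (q : CQ) (S : Schema) : Prop :=
  ∀ a ∈ q.atoms, a.rel ∈ S.rels ∧ a.args.length = S.arity a.rel ∧ a.constFree

/-- `t` is an answer to the CQ `q` on `I`. -/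
def CQ.holds (q : CQ) (I : Inst) (t : List Const) : Prop :=
  ∃ h : Var → Const,
    (∀ a ∈ q.atoms, a.app h ∈ I) ∧
    (∀ e ∈ q.eqs, h e.1 = h e.2) ∧
    q.answers.map h = t

/-- A union of conjunctive queries is a finite list of CQs. -/
abbrev UCQ := List CQ

def UCQHolds (u : UCQ) (I : Inst) (t : List Const) : Prop :=
  ∃ q ∈ u, q.holds I t

def UCQOver (u : UCQ) (S : Schema) (n : ℕ) : Prop :=
  ∀ q ∈ u, q.over S ∧ q.answers.length = n

def Term.toConst : Term → Const
  | .var x => x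
  | .const c => c

/-- A CQ viewed as an instance (variables as constants). -/
def CQ.toInst (q : CQ) : Inst :=
  (q.atoms.map (fun a => (⟨a.rel, a.args.map Term.toConst⟩ : Fact))).toFinset

/-! ### First-order queries -/

/-- First-order formulas over a relational vocabulary, possibly with equality,
without constants and function symbols. -/
inductive FO where
  | rel : RelSym → List Var → FO
  | eq : Var → Var → FO
  | neg : FO → FO
  | conj : FO → FO → FO
  | disj : FO → FO → FO
  | ex : Var → FO → FO
  | all : Var → FO → FO

/-- Evaluation of a first-order formula in an instance (active-domain quantification). -/
def FO.eval (I : Inst) : FO → (Var → Const) → Prop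
  | .rel r xs, v => (⟨r, xs.map v⟩ : Fact) ∈ I
  | .eq x y, v => v x = v y
  | .neg φ, v => ¬ FO.eval I φ v
  | .conj φ ψ, v => FO.eval I φ v ∧ FO.eval I ψ v
  | .disj φ ψ, v => FO.eval I φ v ∨ FO.eval I ψ v
  | .ex x φ, v => ∃ c ∈ adom I, FO.eval I φ (Function.update v x c)
  | .all x φ, v => ∀ c ∈ adom I, FO.eval I φ (Function.update v x c)

/-- The formula only uses relation symbols from `S`, with correct arities. -/
def FO.over (S : Schema) : FO → Prop
  | .rel r xs => r ∈ S.rels ∧ xs.length = S.arity r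
  | .eq _ _ => True
  | .neg φ => FO.over S φ
  | .conj φ ψ => FO.over S φ ∧ FO.over S ψ
  | .disj φ ψ => FO.over S φ ∧ FO.over S ψ
  | .ex _ φ => FO.over S φ
  | .all _ φ => FO.over S φ

/-- Free variables of a first-order formula. -/
def FO.free : FO → Finset Var
  | .rel _ xs => xs.toFinset
  | .eq x y => {x, y}
  | .neg φ => φ.free
  | .conj φ ψ => φ.free ∪ ψ.free
  | .disj φ ψ => φ.free ∪ ψ.free
  | .ex x φ => φ.free.erase x
  | .all x φ => φ.free.erase x

/-! ### Rewritings -/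

/-- `φ` is an FO-rewriting of the (n-ary) program `P` over `S`
(answer variables are `0, …, n-1`). -/
def FOIsRewritingOf (φ : FO) (S : Schema) (P : Program) : Prop :=
  FO.over S φ ∧ φ.free ⊆ Finset.range P.goalArity ∧
  ∀ I : Inst, S.IsInstance I → ∀ t : List Const, t.length = P.goalArity →
    (∀ c ∈ t, c ∈ adom I) → (FO.eval I φ (fun i => t.getD i 0) ↔ P.models I t)

/-- `u` is a UCQ-rewriting of the program `P` over `S`. -/
def UCQIsRewritingOf (u : UCQ) (S : Schema) (P : Program) : Prop :=
  UCQOver u S P.goalArity ∧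
  ∀ I : Inst, S.IsInstance I → ∀ t : List Const, t.length = P.goalArity →
    (∀ c ∈ t, c ∈ adom I) → (UCQHolds u I t ↔ P.models I t)

/-- The program `Γ` is a rewriting of the program `P` over `S`. -/
def Program.IsRewritingOf (Γ : Program) (S : Schema) (P : Program) : Prop :=
  Γ.goalArity = P.goalArity ∧
  ∀ I : Inst, S.IsInstance I → ∀ t : List Const, t.length = P.goalArity →
    (∀ c ∈ t, c ∈ adom I) → (Γ.models I t ↔ P.models I t)

/-- The program `Γ` is sound for the program `P` over `S`. -/
def Program.SoundFor (Γ : Program) (S : Schema) (P : Program) : Prop :=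
  ∀ I : Inst, S.IsInstance I → ∀ t : List Const, t.length = P.goalArity →
    (∀ c ∈ t, c ∈ adom I) → Γ.models I t → P.models I t

/-! ### Boolean queries, CSPs -/

/-- The complement of the generalized CSP given by the set of templates `S`, as a
Boolean query: true on `I` iff `I` maps homomorphically to no template in `S`. -/
def coCSP (S : Finset Inst) : Inst → Prop := fun I => ∀ T ∈ S, ¬ HomTo I T

/-- `φ` is an FO-definition (rewriting) of the Boolean query `Q` over `S`. -/
def IsFODefOf (φ : FO) (S : Schema) (Q : Inst → Prop) : Prop :=
  FO.over S φ ∧ φ.free = ∅ ∧ ∀ I : Inst, S.IsInstance I → (FO.eval I φ (fun _ => 0) ↔ Q I)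

/-- `u` is a UCQ-definition (rewriting) of the Boolean query `Q` over `S`. -/
def IsUCQDefOf (u : UCQ) (S : Schema) (Q : Inst → Prop) : Prop :=
  UCQOver u S 0 ∧ ∀ I : Inst, S.IsInstance I → (UCQHolds u I [] ↔ Q I)

/-- `Γ` is an MDLog-definition (rewriting) of the Boolean query `Q` over `S`. -/
def IsMDLogDefOf (Γ : Program) (S : Schema) (Q : Inst → Prop) : Prop :=
  Γ.IsMDLog S ∧ Γ.constFree ∧ Γ.goalArity = 0 ∧
  ∀ I : Inst, S.IsInstance I → (Γ.models I [] ↔ Q I)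

/-- `Γ` is a Datalog-definition (rewriting) of the Boolean query `Q` over `S`. -/
def IsDLogDefOf (Γ : Program) (S : Schema) (Q : Inst → Prop) : Prop :=
  Γ.IsDatalog S ∧ Γ.constFree ∧ Γ.goalArity = 0 ∧
  ∀ I : Inst, S.IsInstance I → (Γ.models I [] ↔ Q I)

/-! ### Aggregation schemas -/

/-- A `k`-aggregation schema for `SE`: every relation `R` is of the form `R_{q(x̄)}` for a
quantifier-free CQ `q(x̄)` over `SE` with at most `k` answer variables, the arity of `R`
being the number of answer variables of `q(x̄)`. -/
structure Aggregation (SE : Schema) (k : ℕ) where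
  S : Schema
  q : RelSym → CQ
  wf : ∀ R ∈ S.rels,
    (q R).over SE ∧
    (q R).eqs = [] ∧
    (q R).answers.Nodup ∧
    (q R).answers.length = S.arity R ∧
    (q R).answers.length ≤ k ∧
    (∀ a ∈ (q R).atoms, a.vars ⊆ (q R).answers.toFinset)

/-- `I'` is the `S'`-instance corresponding to the `SE`-instance `I`: it consists of all
facts `R_{q(x̄)}(ā)` with `I ⊨ q(ā)`. -/
def CorrUp {SE : Schema} {k : ℕ} (A : Aggregation SE k) (I I' : Inst) : Prop :=
  ∀ f : Fact, f ∈ I' ↔ (f.rel ∈ A.S.rels ∧ (A.q f.rel).holds I f.args)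

/-- `I` is the `SE`-instance corresponding to the `S'`-instance `I'`: it consists of all
facts that occur as a conjunct of `q(ā)` for some fact `R_{q(x̄)}(ā) ∈ I'`. -/
def CorrDown {SE : Schema} {k : ℕ} (A : Aggregation SE k) (I' I : Inst) : Prop :=
  ∀ g : Fact, g ∈ I ↔
    ∃ f ∈ I', ∃ h : Var → Const,
      (A.q f.rel).answers.map h = f.args ∧ ∃ a ∈ (A.q f.rel).atoms, Atom.app a h = g

/-! ### Equality -/

/-- The distinguished binary relation symbol `eq`. -/
def eqRel : RelSym := 0

/-- The schema contains the distinguished binary relation `eq`. -/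
def HasEqualitySchema (S : Schema) : Prop := eqRel ∈ S.rels ∧ S.arity eqRel = 2

/-- A template has equality: it interprets `eq` as `{(a,a) | a ∈ adom T}`. -/
def TemplateHasEquality (T : Inst) : Prop :=
  ∀ a b : Const, ((⟨eqRel, [a, b]⟩ : Fact) ∈ T ↔ (a = b ∧ a ∈ adom T))

def eqRuleFwd (R : RelSym) : Rule :=
  ⟨[⟨R, [Term.var 1]⟩], [⟨R, [Term.var 0]⟩, ⟨eqRel, [Term.var 0, Term.var 1]⟩]⟩

def eqRuleBwd (R : RelSym) : Rule :=
  ⟨[⟨R, [Term.var 0]⟩], [⟨R, [Term.var 1]⟩, ⟨eqRel, [Term.var 0, Term.var 1]⟩]⟩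

/-- The extension `P^=` of `P` with the fresh EDB relation `eq` and the rules
`P(x) ∧ eq(x,y) → P(y)` and `P(y) ∧ eq(x,y) → P(x)` for each IDB relation `P`. -/
def Program.withEq (P : Program) : Program :=
  ⟨P.rules ∪ (P.IDB.erase P.goal).biUnion (fun R => {eqRuleFwd R, eqRuleBwd R}),
   P.goal, P.goalArity⟩

/-! ### (1,k)-decompositions and decomposition girth -/

def partInst (I : Inst) (part : Fact → ℕ) (v : ℕ) : Inst :=
  I.filter (fun f => part f = v)

/-- `part` induces a `(1,k)`-decomposition of `I`: parts have active domains of size at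
most `k`, distinct parts overlap in at most one constant. -/
def IsDecompOf (I : Inst) (part : Fact → ℕ) (k : ℕ) : Prop :=
  (∀ v ∈ I.image part, (adom (partInst I part v)).card ≤ k) ∧
  (∀ v w, v ∈ I.image part → w ∈ I.image part → v ≠ w →
    ((adom (partInst I part v)) ∩ (adom (partInst I part w))).card ≤ 1)

/-- The instance over an aggregation schema induced by a decomposition: one fact per part,
whose arguments enumerate the active domain of the part (in a fixed order). -/
def decompInst (I : Inst) (part : Fact → ℕ) : Inst :=
  (I.image part).image
    (fun v => (⟨v, (adom (partInst I part v)).sort (· ≤ ·)⟩ : Fact))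

/-- The `(1,k)`-decomposition girth of `I` exceeds `g`: some `(1,k)`-decomposition `D` of
`I` is such that the girth of `I_D` exceeds `g`. -/
def DecompGirthGT (I : Inst) (k g : ℕ) : Prop :=
  ∃ part : Fact → ℕ, IsDecompOf I part k ∧ GirthGT (decompInst I part) g

/-! ### MMSNP -/

/-- An atom `X_i(x_j)` built from a monadic second-order variable. -/
structure SOAtom where
  pred : ℕ
  var : Var
deriving DecidableEq

/-- An implication `β₁ ∨ ⋯ ∨ βₙ ← α₁ ∧ ⋯ ∧ αₘ` of an MMSNP formula: the `β`s are
second-order atoms, the `α`s are second-order atoms or EDB atoms. -/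
structure MMSNPImpl where
  headDisjuncts : List SOAtom
  bodySO : List SOAtom
  bodyEDB : List Fact
deriving DecidableEq

/-- An MMSNP formula `∃X₁⋯∃Xp ∀x₁⋯∀xm φ` with `freeVarCount` free first-order variables
(the variables `0, …, freeVarCount - 1`). -/
structure MMSNP where
  freeVarCount : ℕ
  impls : List MMSNPImpl

def MMSNPOver (θ : MMSNP) (S : Schema) : Prop :=
  ∀ c ∈ θ.impls, ∀ f ∈ c.bodyEDB, f.rel ∈ S.rels ∧ f.args.length = S.arity f.rel

def MMSNPImpl.vars (c : MMSNPImpl) : Finset Var :=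
  (c.headDisjuncts.map SOAtom.var).toFinset ∪ (c.bodySO.map SOAtom.var).toFinset ∪
    c.bodyEDB.foldr (fun f s => f.args.toFinset ∪ s) ∅

/-- The diameter of an MMSNP formula: the maximum number of variables in an implication. -/
def MMSNP.diameter (θ : MMSNP) : ℕ :=
  (θ.impls.map (fun c => c.vars.card)).foldr max 0

/-- `I ⊨ θ[t]`: satisfaction of an MMSNP formula in an instance, with the free variables
`0, …, freeVarCount-1` interpreted by the tuple `t`. -/
def MMSNPSat (θ : MMSNP) (I : Inst) (t : List Const) : Prop :=
  ∃ X : ℕ → Set Const,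
    ∀ v : Var → Const, (∀ x, v x ∈ adom I) → (∀ i < θ.freeVarCount, v i = t.getD i 0) →
      ∀ c ∈ θ.impls,
        ((∀ a ∈ c.bodySO, v a.var ∈ X a.pred) ∧
         (∀ f ∈ c.bodyEDB, (⟨f.rel, f.args.map v⟩ : Fact) ∈ I)) →
        ∃ a ∈ c.headDisjuncts, v a.var ∈ X a.pred

end DDLogPaper

namespace DDLogPaper.S9

open Finset

lemma subset_foldr_union {α β : Type} [DecidableEq β] (f : α → Finset β) :
    ∀ (l : List α) {a : α}, a ∈ l → f a ⊆ l.foldr (fun x s => f x ∪ s) ∅ := by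
  intro l
  induction l with
  | nil => intro a h; cases h
  | cons b l ih =>
      intro a h
      rcases List.mem_cons.mp h with h | h
      · subst h; exact Finset.subset_union_left
      · exact (ih h).trans Finset.subset_union_right

lemma mem_atom_vars {a : Atom} {x : Var} (h : Term.var x ∈ a.args) : x ∈ a.vars :=
  subset_foldr_union Term.varSet a.args h (by simp [Term.varSet])

lemma atom_vars_subset_rule_vars {ρ : Rule} {a : Atom} (h : a ∈ ρ.atoms) :
    a.vars ⊆ ρ.vars :=
  subset_foldr_union Atom.vars ρ.atoms h

lemma mem_adom {I : Inst} {f : Fact} {c : Const} (hf : f ∈ I) (hc : c ∈ f.args) :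
    c ∈ adom I :=
  Finset.mem_biUnion.mpr ⟨f, hf, List.mem_toFinset.mpr hc⟩

lemma adom_mono {J I : Inst} (h : J ⊆ I) : adom J ⊆ adom I := by
  intro c hc
  rcases Finset.mem_biUnion.mp hc with ⟨f, hf, hc⟩
  exact Finset.mem_biUnion.mpr ⟨f, h hf, hc⟩

lemma eval_comp {h : Const → Const} {v : Var → Const} {t : Term} (ht : ∃ x, t = Term.var x) :
    Term.eval (fun x => h (v x)) t = h (Term.eval v t) := by
  obtain ⟨x, rfl⟩ := ht; rfl

lemma app_comp {h : Const → Const} {v : Var → Const} {a : Atom} (ha : a.constFree) :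
    a.app (fun x => h (v x)) = ⟨a.rel, (a.app v).args.map h⟩ := by
  unfold Atom.app
  simp only [List.map_map, Fact.mk.injEq, true_and]
  exact List.map_congr_left fun t ht => eval_comp (ha t ht)

/-- The easy direction: if `J → I` then `J ⊨ P` implies `I ⊨ P`. -/
lemma models_of_hom {P : Program} (hcf : P.constFree) {J I : Inst} {h : Const → Const}
    (hh : IsHom h J I) (hm : P.models J []) : P.models I [] := by
  intro K hIK hcl
  have main : (⟨P.goal, ([] : List Const).map h⟩ : Fact) ∈ K := by
    refine hm (fun f => (⟨f.rel, f.args.map h⟩ : Fact) ∈ K) ?_ ?_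
    · intro f hf
      exact hIK (hh f hf)
    · intro ρ hρ v hb
      have hbK : ∀ a ∈ ρ.body, a.app (fun x => h (v x)) ∈ K := by
        intro a ha
        rw [app_comp (hcf ρ hρ a (List.mem_append.mpr (Or.inr ha)))]
        exact hb a ha
      rcases hcl ρ hρ (fun x => h (v x)) hbK with ⟨a, ha, haK⟩
      refine ⟨a, ha, ?_⟩
      rw [app_comp (hcf ρ hρ a (List.mem_append.mpr (Or.inl ha)))] at haK
      exact haK
  simpa using main

/-! ### Core construction -/

section Core

variable (I : Inst) (s G q M : ℕ)

abbrev ATy := {x : ℕ // x ∈ adom I}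

def Shapes : Finset (Finset ℕ) :=
  (adom I).powerset.filter (fun B => B.Nonempty ∧ B.card ≤ s)

abbrev ShapeTy := {B // B ∈ Shapes I s}

abbrev PId := ShapeTy I s × Fin q

abbrev Om := PId I s q → ATy I → Fin M

def rot {n : ℕ} (i : Fin n) : Fin n :=
  ⟨(i.val + 1) % n, Nat.mod_lt _ (Nat.pos_of_ne_zero (by
    rintro rfl; exact absurd i.isLt (by omega)))⟩

def rotInv {n : ℕ} (i : Fin n) : Fin n :=
  ⟨(i.val + n - 1) % n, Nat.mod_lt _ (Nat.pos_of_ne_zero (by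
    rintro rfl; exact absurd i.isLt (by omega)))⟩

lemma rot_val {n : ℕ} (i : Fin n) : (rot i).val = (i.val + 1) % n := rfl

lemma rot_rotInv {n : ℕ} (i : Fin n) : rot (rotInv i) = i := by
  have hn : 0 < n := lt_of_le_of_lt (Nat.zero_le _) i.isLt
  apply Fin.ext
  show ((i.val + n - 1) % n + 1) % n = i.val
  rcases Nat.eq_zero_or_pos i.val with h0 | h0
  · rw [h0]
    have h1 : (0 + n - 1) % n = n - 1 := by
      rw [Nat.zero_add]; exact Nat.mod_eq_of_lt (by omega)
    rw [h1]
    have : n - 1 + 1 = n := by omega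
    rw [this, Nat.mod_self]
  · have h1 : i.val + n - 1 = (i.val - 1) + n := by omega
    have h2 : (i.val + n - 1) % n = i.val - 1 := by
      rw [h1, Nat.add_mod_right]
      exact Nat.mod_eq_of_lt (by have := i.isLt; omega)
    rw [h2]
    have : i.val - 1 + 1 = i.val := by omega
    rw [this]
    exact Nat.mod_eq_of_lt i.isLt

lemma rotInv_rot {n : ℕ} (i : Fin n) : rotInv (rot i) = i := by
  have hn : 0 < n := lt_of_le_of_lt (Nat.zero_le _) i.isLt
  apply Fin.ext
  show ((i.val + 1) % n + n - 1) % n = i.val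
  rcases Nat.lt_or_ge (i.val + 1) n with h | h
  · rw [Nat.mod_eq_of_lt h]
    have h1 : i.val + 1 + n - 1 = i.val + n := by omega
    rw [h1, Nat.add_mod_right]
    exact Nat.mod_eq_of_lt i.isLt
  · have h1 : i.val + 1 = n := by have := i.isLt; omega
    rw [h1, Nat.mod_self]
    have h2 : 0 + n - 1 = n - 1 := by omega
    rw [h2, Nat.mod_eq_of_lt (by omega)]
    omega

abbrev Pats (n : ℕ) := (Fin n → PId I s q) × (Fin n → ATy I) × (Fin n → ATy I)

def Valid {n : ℕ} (pat : Pats I s q n) : Prop :=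
  Function.Injective pat.1 ∧ ∀ i, pat.2.1 i ≠ pat.2.2 i

def Realized {n : ℕ} (ω : Om I s q M) (pat : Pats I s q n) : Prop :=
  ∀ i, ω (pat.1 i) (pat.2.1 i) = ω (pat.1 (rot i)) (pat.2.2 (rot i))

instance validDec {n : ℕ} (pat : Pats I s q n) : Decidable (Valid I s q pat) := by
  unfold Valid; infer_instance

instance realizedDec {n : ℕ} (ω : Om I s q M) (pat : Pats I s q n) :
    Decidable (Realized I s q M ω pat) := by
  unfold Realized; infer_instance

def Clean (ω : Om I s q M) (p : PId I s q) : Prop :=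
  ∀ n : Fin (G + 1), 2 ≤ n.val → ∀ pat : Pats I s q n.val,
    Valid I s q pat → Realized I s q M ω pat → ∀ i, pat.1 i ≠ p

instance cleanDec (ω : Om I s q M) (p : PId I s q) : Decidable (Clean I s G q M ω p) := by
  unfold Clean; infer_instance

noncomputable def liftc (ω : Om I s q M) (p : PId I s q) (c : ℕ) : ℕ :=
  if h : c ∈ adom I then Nat.pair c (ω p ⟨c, h⟩).val else Nat.pair c M

lemma liftc_fst (ω : Om I s q M) (p : PId I s q) (c : ℕ) :
    (liftc I s q M ω p c).unpair.1 = c := by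
  unfold liftc; split <;> simp [Nat.unpair_pair]

noncomputable def pfacts (ω : Om I s q M) (p : PId I s q) : Inst :=
  (I.filter (fun f => ∀ c ∈ f.args, c ∈ (p.1.1 : Finset ℕ))).image
    (fun f => ⟨f.rel, f.args.map (liftc I s q M ω p)⟩)

lemma mem_pfacts {ω : Om I s q M} {p : PId I s q} {f : Fact} :
    f ∈ pfacts I s q M ω p ↔
      ∃ f₀ ∈ I, (∀ c ∈ f₀.args, c ∈ (p.1.1 : Finset ℕ)) ∧
        f = ⟨f₀.rel, f₀.args.map (liftc I s q M ω p)⟩ := by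
  unfold pfacts
  simp only [Finset.mem_image, Finset.mem_filter]
  constructor
  · rintro ⟨f₀, ⟨h1, h2⟩, rfl⟩; exact ⟨f₀, h1, h2, rfl⟩
  · rintro ⟨f₀, h1, h2, rfl⟩; exact ⟨f₀, ⟨h1, h2⟩, rfl⟩

noncomputable def Surv (ω : Om I s q M) : Finset (PId I s q) :=
  Finset.univ.filter (fun p => Clean I s G q M ω p)

lemma mem_Surv {ω : Om I s q M} {p : PId I s q} :
    p ∈ Surv I s G q M ω ↔ Clean I s G q M ω p := by
  unfold Surv
  rw [Finset.mem_filter]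
  simp

noncomputable def JJ (ω : Om I s q M) : Inst :=
  (Surv I s G q M ω).biUnion (pfacts I s q M ω)

noncomputable def pidx : PId I s q → ℕ := fun p => (Fintype.equivFin (PId I s q) p).val

lemma pidx_inj : Function.Injective (pidx I s q) := by
  intro a b h
  exact (Fintype.equivFin (PId I s q)).injective (Fin.ext h)

noncomputable def partfn (ω : Om I s q M) (f : Fact) : ℕ :=
  if h : (((Surv I s G q M ω)).filter (fun p => f ∈ pfacts I s q M ω p)).Nonempty
  then ((((Surv I s G q M ω)).filter
      (fun p => f ∈ pfacts I s q M ω p)).image (pidx I s q)).min' (h.image _)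
  else 0

lemma part_spec {ω : Om I s q M} {f : Fact} (hf : f ∈ JJ I s G q M ω) :
    ∃ p ∈ Surv I s G q M ω, partfn I s G q M ω f = pidx I s q p ∧
      f ∈ pfacts I s q M ω p := by
  rcases Finset.mem_biUnion.mp hf with ⟨p₀, hp₀, hfp₀⟩
  have hne : (((Surv I s G q M ω)).filter (fun p => f ∈ pfacts I s q M ω p)).Nonempty :=
    ⟨p₀, Finset.mem_filter.mpr ⟨hp₀, hfp₀⟩⟩
  have hval : partfn I s G q M ω f =
      ((((Surv I s G q M ω)).filter
        (fun p => f ∈ pfacts I s q M ω p)).image (pidx I s q)).min' (hne.image _) := by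
    unfold partfn; rw [dif_pos hne]
  have hmem := Finset.min'_mem ((((Surv I s G q M ω)).filter
      (fun p => f ∈ pfacts I s q M ω p)).image (pidx I s q)) (hne.image _)
  rcases Finset.mem_image.mp hmem with ⟨p, hp, hpv⟩
  rcases Finset.mem_filter.mp hp with ⟨hps, hpf⟩
  exact ⟨p, hps, by rw [hval, hpv], hpf⟩

lemma partInst_subset {ω : Om I s q M} {p : PId I s q} {f : Fact}
    (hf : f ∈ partInst (JJ I s G q M ω) (partfn I s G q M ω) (pidx I s q p)) :
    f ∈ pfacts I s q M ω p := by
  rcases Finset.mem_filter.mp hf with ⟨hfJ, hfv⟩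
  rcases part_spec I s G q M hfJ with ⟨p₀, _, hv, hp₀⟩
  have : p₀ = p := pidx_inj I s q (by rw [← hv, hfv])
  exact this ▸ hp₀

lemma adom_partInst_subset {ω : Om I s q M} {p : PId I s q} :
    adom (partInst (JJ I s G q M ω) (partfn I s G q M ω) (pidx I s q p)) ⊆
      (p.1.1).image (liftc I s q M ω p) := by
  intro c hc
  rcases Finset.mem_biUnion.mp hc with ⟨f, hf, hcf⟩
  have hpf := partInst_subset I s G q M hf
  rcases (mem_pfacts I s q M).mp hpf with ⟨f₀, _, hargs, rfl⟩
  rcases List.mem_map.mp (List.mem_toFinset.mp hcf) with ⟨c₀, hc₀, rfl⟩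
  exact Finset.mem_image.mpr ⟨c₀, hargs c₀ hc₀, rfl⟩

lemma common_const {ω : Om I s q M} {p p' : PId I s q} {c : ℕ}
    (h1 : c ∈ (p.1.1).image (liftc I s q M ω p))
    (h2 : c ∈ (p'.1.1).image (liftc I s q M ω p')) :
    ∃ (a : ℕ) (ha : a ∈ adom I), a ∈ (p.1.1 : Finset ℕ) ∧ a ∈ (p'.1.1 : Finset ℕ) ∧
      c = Nat.pair a (ω p ⟨a, ha⟩).val ∧ ω p ⟨a, ha⟩ = ω p' ⟨a, ha⟩ := by
  rcases Finset.mem_image.mp h1 with ⟨a, haB, hac⟩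
  rcases Finset.mem_image.mp h2 with ⟨a', haB', hac'⟩
  have haA : a ∈ adom I := by
    have := Finset.mem_powerset.mp (Finset.mem_filter.mp p.1.2).1
    exact this haB
  have haA' : a' ∈ adom I := by
    have := Finset.mem_powerset.mp (Finset.mem_filter.mp p'.1.2).1
    exact this haB'
  have e1 : liftc I s q M ω p a = Nat.pair a (ω p ⟨a, haA⟩).val := by
    unfold liftc; rw [dif_pos haA]
  have e2 : liftc I s q M ω p' a' = Nat.pair a' (ω p' ⟨a', haA'⟩).val := by
    unfold liftc; rw [dif_pos haA']
  have heq : Nat.pair a (ω p ⟨a, haA⟩).val = Nat.pair a' (ω p' ⟨a', haA'⟩).val := by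
    rw [← e1, ← e2, hac, hac']
  have hfst : a = a' := by
    have := congrArg (fun x => x.unpair.1) heq
    simpa [Nat.unpair_pair] using this
  subst hfst
  have hsnd : (ω p ⟨a, haA⟩).val = (ω p' ⟨a, haA'⟩).val := by
    have := congrArg (fun x => x.unpair.2) heq
    simpa [Nat.unpair_pair] using this
  refine ⟨a, haA, haB, haB', by rw [← e1, hac], ?_⟩
  exact Fin.ext hsnd

end Core

section Decomp

variable (I : Inst) (s G q M : ℕ)

lemma shape_card_le (p : PId I s q) : (p.1.1 : Finset ℕ).card ≤ s :=
  (Finset.mem_filter.mp p.1.2).2.2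

lemma image_part_spec {ω : Om I s q M} {v : ℕ}
    (hv : v ∈ (JJ I s G q M ω).image (partfn I s G q M ω)) :
    ∃ p ∈ Surv I s G q M ω, v = pidx I s q p := by
  rcases Finset.mem_image.mp hv with ⟨f, hf, rfl⟩
  rcases part_spec I s G q M hf with ⟨p, hp, hveq, _⟩
  exact ⟨p, hp, hveq⟩

lemma isDecomp (ω : Om I s q M) (hG2 : 2 ≤ G) :
    IsDecompOf (JJ I s G q M ω) (partfn I s G q M ω) s := by
  constructor
  · intro v hv
    rcases image_part_spec I s G q M hv with ⟨p, _, rfl⟩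
    calc (adom (partInst (JJ I s G q M ω) (partfn I s G q M ω) (pidx I s q p))).card
        ≤ ((p.1.1).image (liftc I s q M ω p)).card :=
          Finset.card_le_card (adom_partInst_subset I s G q M)
      _ ≤ (p.1.1 : Finset ℕ).card := Finset.card_image_le
      _ ≤ s := shape_card_le I s q p
  · intro v w hv hw hvw
    rcases image_part_spec I s G q M hv with ⟨p, hp, rfl⟩
    rcases image_part_spec I s G q M hw with ⟨p', hp', rfl⟩
    have hpp' : p ≠ p' := by
      rintro rfl; exact hvw rfl
    by_contra hgt
    push_neg at hgt
    obtain ⟨c₁, hc₁, c₂, hc₂, hne⟩ := Finset.one_lt_card.mp hgt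
    have hc₁p := (Finset.mem_inter.mp hc₁).1
    have hc₁p' := (Finset.mem_inter.mp hc₁).2
    have hc₂p := (Finset.mem_inter.mp hc₂).1
    have hc₂p' := (Finset.mem_inter.mp hc₂).2
    obtain ⟨a₁, ha₁, ha₁B, ha₁B', hpair₁, hagr₁⟩ :=
      common_const I s q M (adom_partInst_subset I s G q M hc₁p)
        (adom_partInst_subset I s G q M hc₁p')
    obtain ⟨a₂, ha₂, ha₂B, ha₂B', hpair₂, hagr₂⟩ :=
      common_const I s q M (adom_partInst_subset I s G q M hc₂p)
        (adom_partInst_subset I s G q M hc₂p')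
    have haa : a₁ ≠ a₂ := by
      rintro rfl
      exact hne (by rw [hpair₁, hpair₂])
    set pat : Pats I s q 2 :=
      (![p, p'], ![⟨a₁, ha₁⟩, ⟨a₂, ha₂⟩], ![⟨a₂, ha₂⟩, ⟨a₁, ha₁⟩]) with hpat
    have hrot0 : rot (0 : Fin 2) = 1 := by decide
    have hrot1 : rot (1 : Fin 2) = 0 := by decide
    have hvalid : Valid I s q pat := by
      constructor
      · intro i j hij
        fin_cases i <;> fin_cases j <;> simp_all [hpat] <;>
          first
          | rfl
          | exact absurd hij hpp'
          | exact absurd hij.symm hpp'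
      · intro i
        fin_cases i <;>
          simp [hpat, Ne, Subtype.ext_iff, haa, haa.symm]
    have hreal : Realized I s q M ω pat := by
      intro i
      fin_cases i
      · rw [show ((⟨0, by omega⟩ : Fin 2)) = (0 : Fin 2) from rfl, hrot0]
        simpa [hpat] using hagr₁
      · rw [show ((⟨1, by omega⟩ : Fin 2)) = (1 : Fin 2) from rfl, hrot1]
        simpa [hpat] using hagr₂.symm
    have hclean := (mem_Surv I s G q M).mp hp ⟨2, by omega⟩ le_rfl pat hvalid hreal 0
    simp [hpat] at hclean

lemma girthGT (ω : Om I s q M) (hG2 : 2 ≤ G) :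
    GirthGT (decompInst (JJ I s G q M ω) (partfn I s G q M ω)) G := by
  intro n hn hcyc
  obtain ⟨hpos, f, pos, pos', hmem, hdist, hb, hchain⟩ := hcyc
  have hP : ∀ i : Fin n, ∃ p, p ∈ Surv I s G q M ω ∧
      f i.val = ⟨pidx I s q p,
        (adom (partInst (JJ I s G q M ω) (partfn I s G q M ω) (pidx I s q p))).sort (· ≤ ·)⟩ := by
    intro i
    have hmi := hmem i.val i.isLt
    unfold decompInst at hmi
    rcases Finset.mem_image.mp hmi with ⟨v, hv, hfi⟩
    rcases image_part_spec I s G q M hv with ⟨p, hp, rfl⟩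
    exact ⟨p, hp, hfi.symm⟩
  choose pf hpfS hpfE using hP
  have hnodup : ∀ i : Fin n, (f i.val).args.Nodup := by
    intro i
    rw [hpfE i]
    exact Finset.sort_nodup _ _
  -- the two designated constants of each fact
  rcases Nat.lt_or_ge n 2 with h2 | h2
  · -- n = 1
    have hn1 : n = 1 := by omega
    subst hn1
    have hb0 := hb 0 Nat.one_pos
    have hch0 := hchain 0 Nat.one_pos
    simp only [Nat.zero_add, Nat.mod_self] at hch0
    rw [List.getD_eq_getElem _ _ hb0.2.2, List.getD_eq_getElem _ _ hb0.2.1] at hch0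
    have := (List.Nodup.getElem_inj_iff (hnodup 0)).mp hch0
    exact hb0.1 this.symm
  · -- n ≥ 2
    have hinj : Function.Injective pf := by
      intro i j hij
      have : f i.val = f j.val := by rw [hpfE i, hpfE j, hij]
      have := hdist i.val j.val i.isLt j.isLt this
      exact Fin.ext this
    set c : Fin n → ℕ := fun i => (f i.val).args.getD (pos' i.val) 0 with hc
    set d : Fin n → ℕ := fun i => (f i.val).args.getD (pos i.val) 0 with hd
    have hcd : ∀ i : Fin n, c i = d (rot i) := by
      intro i
      have := hchain i.val i.isLt
      simpa [hc, hd, rot_val] using this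
    have hcne : ∀ i : Fin n, c i ≠ d i := by
      intro i
      have hbi := hb i.val i.isLt
      rw [hc, hd]
      simp only
      rw [List.getD_eq_getElem _ _ hbi.2.2, List.getD_eq_getElem _ _ hbi.2.1]
      intro h
      exact hbi.1 ((List.Nodup.getElem_inj_iff (hnodup i)).mp h).symm
    have hcadom : ∀ i : Fin n, c i ∈
        adom (partInst (JJ I s G q M ω) (partfn I s G q M ω) (pidx I s q (pf i))) := by
      intro i
      have hbi := hb i.val i.isLt
      have : c i ∈ (f i.val).args := by
        rw [hc]; simp only
        rw [List.getD_eq_getElem _ _ hbi.2.2]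
        exact List.getElem_mem _
      rw [hpfE i] at this
      exact (Finset.mem_sort _).mp this
    have hdadom : ∀ i : Fin n, d i ∈
        adom (partInst (JJ I s G q M ω) (partfn I s G q M ω) (pidx I s q (pf i))) := by
      intro i
      have hbi := hb i.val i.isLt
      have : d i ∈ (f i.val).args := by
        rw [hd]; simp only
        rw [List.getD_eq_getElem _ _ hbi.2.1]
        exact List.getElem_mem _
      rw [hpfE i] at this
      exact (Finset.mem_sort _).mp this
    have hcc : ∀ i : Fin n, ∃ (a : ℕ) (ha : a ∈ adom I),
        a ∈ ((pf i).1.1 : Finset ℕ) ∧ a ∈ ((pf (rot i)).1.1 : Finset ℕ) ∧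
        c i = Nat.pair a (ω (pf i) ⟨a, ha⟩).val ∧
        ω (pf i) ⟨a, ha⟩ = ω (pf (rot i)) ⟨a, ha⟩ := by
      intro i
      have h1 : c i ∈ ((pf i).1.1).image (liftc I s q M ω (pf i)) :=
        adom_partInst_subset I s G q M (hcadom i)
      have h2 : c i ∈ ((pf (rot i)).1.1).image (liftc I s q M ω (pf (rot i))) := by
        have := hdadom (rot i)
        rw [← hcd i] at this
        exact adom_partInst_subset I s G q M this
      exact common_const I s q M h1 h2
    choose a ha haB haB' hpair hagr using hcc
    have hdpair : ∀ i : Fin n,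
        d i = Nat.pair (a (rotInv i)) (ω (pf i) ⟨a (rotInv i), ha (rotInv i)⟩).val := by
      intro i
      have h1 : d i = c (rotInv i) := by
        rw [hcd (rotInv i), rot_rotInv]
      rw [h1, hpair (rotInv i)]
      have h2 := hagr (rotInv i)
      rw [h2]
      congr 2
      rw [rot_rotInv]
    have haa : ∀ i : Fin n, a i ≠ a (rotInv i) := by
      intro i h
      apply hcne i
      have hsub : (⟨a i, ha i⟩ : ATy I) = ⟨a (rotInv i), ha (rotInv i)⟩ := Subtype.ext h
      rw [hpair i, hdpair i, hsub, h]
    set pat : Pats I s q n :=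
      (pf, fun i => ⟨a i, ha i⟩, fun i => ⟨a (rotInv i), ha (rotInv i)⟩) with hpat
    have hvalid : Valid I s q pat := by
      refine ⟨hinj, ?_⟩
      intro i h
      exact haa i (congrArg Subtype.val h)
    have hreal : Realized I s q M ω pat := by
      intro i
      show ω (pf i) ⟨a i, ha i⟩ =
        ω (pf (rot i)) ⟨a (rotInv (rot i)), ha (rotInv (rot i))⟩
      have h1 := hagr i
      convert h1 using 3 <;> rw [rotInv_rot]
    have i₀ : Fin n := ⟨0, by omega⟩
    exact (mem_Surv I s G q M).mp (hpfS i₀) ⟨n, by omega⟩ h2 pat hvalid hreal i₀ rfl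

lemma girthGT_mono {X : Inst} {g G : ℕ} (h : GirthGT X G) (hg : g ≤ G) : GirthGT X g :=
  fun n hn => h n (le_trans hn hg)

end Decomp

section Transfer

variable (SE : Schema) (I : Inst) (s G q M : ℕ) (P : Program)

lemma list_len_le_one {α : Type} {l : List α} (h : l.length ≤ 1) :
    l = [] ∨ ∃ t, l = [t] := by
  cases l with
  | nil => exact Or.inl rfl
  | cons a l' =>
      right
      refine ⟨a, ?_⟩
      have : l' = [] := by
        cases l' with
        | nil => rfl
        | cons b l'' => simp at h
      rw [this]

lemma JJ_isInstance (hI : SE.IsInstance I) (ω : Om I s q M) :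
    SE.IsInstance (JJ I s G q M ω) := by
  intro f hf
  rcases Finset.mem_biUnion.mp hf with ⟨p, _, hfp⟩
  rcases (mem_pfacts I s q M).mp hfp with ⟨f₀, hf₀, _, rfl⟩
  rcases hI f₀ hf₀ with ⟨h1, h2⟩
  exact ⟨h1, by simpa using h2⟩

lemma JJ_hom (ω : Om I s q M) : IsHom (fun c => c.unpair.1) (JJ I s G q M ω) I := by
  intro f hf
  rcases Finset.mem_biUnion.mp hf with ⟨p, _, hfp⟩
  rcases (mem_pfacts I s q M).mp hfp with ⟨f₀, hf₀, _, rfl⟩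
  have heq : (f₀.args.map (liftc I s q M ω p)).map (fun c : ℕ => c.unpair.1) = f₀.args := by
    rw [List.map_map]
    have h2 : ∀ c ∈ f₀.args, ((fun c : ℕ => c.unpair.1) ∘ liftc I s q M ω p) c = c := by
      intro c _; exact liftc_fst I s q M ω p c
    rw [List.map_congr_left h2, List.map_id']
  show (⟨f₀.rel, (f₀.args.map (liftc I s q M ω p)).map (fun c : ℕ => c.unpair.1)⟩ : Fact) ∈ I
  rw [heq]
  exact hf₀

lemma transfer
    (hI : SE.IsInstance I) (hP : P.IsMDDLog SE) (hcf : P.constFree)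
    (hbool : P.goalArity = 0) (hdiam : P.diameter ≤ s) (hs : 0 < s)
    (hA : (adom I).Nonempty) (hM : 0 < M) (ω : Om I s q M)
    (hrich : ∀ B : ShapeTy I s, ∀ SS : ATy I → Finset (Fin M),
        (∀ a, M ≤ 2 ^ ((P.IDB.erase P.goal).card) * (SS a).card) →
        ∃ p : PId I s q, p.1 = B ∧ p ∈ Surv I s G q M ω ∧ ∀ a, ω p a ∈ SS a)
    (hmods : P.models I []) : P.models (JJ I s G q M ω) [] := by
  intro MJ hsub hcl
  by_contra hgMJ
  classical
  set U := P.IDB.erase P.goal with hU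
  have hUIDB : ∀ R ∈ U, R ∈ P.IDB := fun R h => Finset.mem_of_mem_erase h
  set τ : ℕ → Finset RelSym :=
    fun cst => U.filter (fun R => (⟨R, [cst]⟩ : Fact) ∈ MJ) with hτ
  -- majority colours
  have hmaj : ∀ a : ATy I, ∃ τ₀ ∈ U.powerset,
      M ≤ 2 ^ U.card * ((Finset.univ : Finset (Fin M)).filter
        (fun i => τ (Nat.pair a.1 i.val) = τ₀)).card := by
    intro a
    by_contra hcon
    push_neg at hcon
    have hfib : (Finset.univ : Finset (Fin M)).card =
        ∑ τ₀ ∈ U.powerset, ((Finset.univ : Finset (Fin M)).filter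
          (fun i => τ (Nat.pair a.1 i.val) = τ₀)).card := by
      apply Finset.card_eq_sum_card_fiberwise
      intro i _
      rw [Finset.mem_coe, Finset.mem_powerset, hτ]
      exact Finset.filter_subset _ _
    have hsum : ∑ τ₀ ∈ U.powerset, ((Finset.univ : Finset (Fin M)).filter
        (fun i => τ (Nat.pair a.1 i.val) = τ₀)).card = M := by
      rw [← hfib]; simp
    have hbound : ∀ τ₀ ∈ U.powerset, 2 ^ U.card * ((Finset.univ : Finset (Fin M)).filter
        (fun i => τ (Nat.pair a.1 i.val) = τ₀)).card ≤ M - 1 := by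
      intro τ₀ hτ₀
      have := hcon τ₀ hτ₀
      omega
    have h1 : 2 ^ U.card * M ≤ 2 ^ U.card * (M - 1) := by
      calc 2 ^ U.card * M
          = ∑ τ₀ ∈ U.powerset, 2 ^ U.card * ((Finset.univ : Finset (Fin M)).filter
              (fun i => τ (Nat.pair a.1 i.val) = τ₀)).card := by
            rw [← Finset.mul_sum, hsum]
        _ ≤ ∑ _τ₀ ∈ U.powerset, (M - 1) := Finset.sum_le_sum hbound
        _ = 2 ^ U.card * (M - 1) := by
            rw [Finset.sum_const, Finset.card_powerset, smul_eq_mul]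
    have hCpos : 0 < 2 ^ U.card := Nat.pow_pos (by omega)
    obtain ⟨m, rfl⟩ : ∃ m, M = m + 1 := ⟨M - 1, by omega⟩
    simp only [Nat.add_sub_cancel] at h1
    exact absurd h1 (not_le.mpr ((Nat.mul_lt_mul_left hCpos).mpr (Nat.lt_succ_self m)))
  choose mj hmjpw hmjcard using hmaj
  set SS : ATy I → Finset (Fin M) := fun a =>
    (Finset.univ.filter (fun i => τ (Nat.pair a.1 i.val) = mj a)) with hSS
  -- the colouring of I
  set γ : ℕ → Finset RelSym := fun cst =>
    if h : cst ∈ adom I then mj ⟨cst, h⟩ else τ (Nat.pair cst M) with hγ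
  set MI : Set Fact := fun f => f ∈ I ∨ (f.rel ∈ U ∧
      ((∃ cst, f.args = [cst] ∧ f.rel ∈ γ cst) ∨ (f.args = [] ∧ f ∈ MJ))) with hMI
  have hIMI : (I : Set Fact) ⊆ MI := fun f hf => Or.inl hf
  have hgoalU : P.goal ∉ U := Finset.notMem_erase _ _
  have hdisj : ∀ R ∈ P.IDB, ∀ f ∈ I, f.rel = R → False := by
    intro R hR f hf hrel
    exact hP.1.1 R hR (hrel ▸ (hI f hf).1)
  have hgoalMI : (⟨P.goal, []⟩ : Fact) ∉ MI := by
    rintro (h | ⟨hrel, _⟩)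
    · exact hdisj P.goal (Finset.mem_insert_self _ _) _ h rfl
    · exact hgoalU hrel
  -- membership characterizations
  have hMIunary : ∀ (R : RelSym) (cst : ℕ), R ∈ U →
      ((⟨R, [cst]⟩ : Fact) ∈ MI ↔ R ∈ γ cst) := by
    intro R cst hRU
    constructor
    · rintro (h | ⟨_, ⟨c', hc', hR⟩ | ⟨habs, _⟩⟩)
      · exact absurd h (fun hh => hdisj R (hUIDB R hRU) _ hh rfl)
      · have : c' = cst := by
          have := hc'
          simp only [List.cons.injEq] at this
          exact this.1.symm
        exact this ▸ hR
      · simp at habs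
    · intro h
      exact Or.inr ⟨hRU, Or.inl ⟨cst, rfl, h⟩⟩
  have hMJunary : ∀ (R : RelSym) (cst : ℕ), R ∈ U →
      ((⟨R, [cst]⟩ : Fact) ∈ MJ ↔ R ∈ τ cst) := by
    intro R cst hRU
    rw [hτ]
    simp only [Finset.mem_filter]
    exact ⟨fun h => ⟨hRU, h⟩, fun h => h.2⟩
  have hMInullary : ∀ R : RelSym, R ∈ U →
      ((⟨R, []⟩ : Fact) ∈ MI ↔ (⟨R, []⟩ : Fact) ∈ MJ) := by
    intro R hRU
    constructor
    · rintro (h | ⟨_, ⟨c', hc', _⟩ | ⟨_, hmem⟩⟩)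
      · exact absurd h (fun hh => hdisj R (hUIDB R hRU) _ hh rfl)
      · simp at hc'
      · exact hmem
    · intro h
      exact Or.inr ⟨hRU, Or.inr ⟨rfl, h⟩⟩
  -- closure of MI
  have hclosed : ∀ ρ ∈ P.rules, ρ.holdsIn MI := by
    intro ρ hρ v hbody
    obtain ⟨hbne, hheadv, hbng, hgl1, hglar, hedb⟩ := hP.1.2 ρ hρ
    -- EDB values
    set Bv : Finset ℕ := (adom I).filter (fun aa => ∃ a0 ∈ ρ.body, a0.rel ∉ P.IDB ∧
        ∃ t ∈ a0.args, Term.eval v t = aa) with hBv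
    have hBvsub : Bv ⊆ adom I := Finset.filter_subset _ _
    have hBvcard : Bv.card ≤ s := by
      have h1 : Bv ⊆ (ρ.vars).image v := by
        intro aa haa
        rcases Finset.mem_filter.mp haa with ⟨haA, a0, ha0, hrel, t, ht, hev⟩
        rcases hcf ρ hρ a0 (List.mem_append.mpr (Or.inr ha0)) t ht with ⟨x, rfl⟩
        refine Finset.mem_image.mpr ⟨x, ?_, hev⟩
        exact atom_vars_subset_rule_vars (List.mem_append.mpr (Or.inr ha0)) (mem_atom_vars ht)
      calc Bv.card ≤ ((ρ.vars).image v).card := Finset.card_le_card h1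
        _ ≤ ρ.vars.card := Finset.card_image_le
        _ ≤ P.diameter := by unfold Program.diameter; exact Finset.le_sup (f := fun ρ : Rule => ρ.vars.card) hρ
        _ ≤ s := hdiam
    obtain ⟨a₀, ha₀⟩ := hA
    set B : Finset ℕ := if Bv.Nonempty then Bv else {a₀} with hB
    have hBmem : B ∈ Shapes I s := by
      rw [Shapes, Finset.mem_filter, Finset.mem_powerset]
      by_cases hne : Bv.Nonempty
      · rw [hB, if_pos hne]; exact ⟨hBvsub, hne, hBvcard⟩
      · rw [hB, if_neg hne]
        refine ⟨?_, ⟨a₀, Finset.mem_singleton_self a₀⟩, ?_⟩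
        · intro x hx
          rw [Finset.mem_singleton] at hx
          exact hx ▸ ha₀
        · rw [Finset.card_singleton]; omega
    have hBvB : Bv ⊆ B := by
      by_cases hne : Bv.Nonempty
      · rw [hB, if_pos hne]
      · rw [Finset.not_nonempty_iff_eq_empty.mp hne]
        exact Finset.empty_subset _
    obtain ⟨p, hpB, hpS, hppop⟩ := hrich ⟨B, hBmem⟩ SS (fun a => hmjcard a)
    set v' : Var → ℕ := fun x => liftc I s q M ω p (v x) with hv'
    have happ : ∀ a0 ∈ ρ.atoms,
        a0.app v' = ⟨a0.rel, (a0.app v).args.map (liftc I s q M ω p)⟩ := by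
      intro a0 ha0
      exact app_comp (hcf ρ hρ a0 ha0)
    -- colour agreement along the lift
    have hγτ : ∀ x : Var, γ (v x) = τ (v' x) := by
      intro x
      by_cases hx : v x ∈ adom I
      · have h1 : v' x = Nat.pair (v x) (ω p ⟨v x, hx⟩).val := by
          rw [hv']; simp only; unfold liftc; rw [dif_pos hx]
        have h2 : ω p ⟨v x, hx⟩ ∈ SS ⟨v x, hx⟩ := hppop ⟨v x, hx⟩
        rw [hSS] at h2
        simp only [Finset.mem_filter, Finset.mem_univ, true_and] at h2
        rw [hγ]
        simp only
        rw [dif_pos hx, h1, h2]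
      · have h1 : v' x = Nat.pair (v x) M := by
          rw [hv']; simp only; unfold liftc; rw [dif_neg hx]
        rw [hγ]
        simp only
        rw [dif_neg hx, h1]
    -- body atoms transfer into MJ
    have hbMJ : ∀ a0 ∈ ρ.body, a0.app v' ∈ MJ := by
      intro a0 ha0
      have ha0' : a0 ∈ ρ.atoms := List.mem_append.mpr (Or.inr ha0)
      have hbMI := hbody a0 ha0
      by_cases hIDB : a0.rel ∈ P.IDB
      · have hng : a0.rel ≠ P.goal := hbng a0 ha0
        have hRU : a0.rel ∈ U := Finset.mem_erase.mpr ⟨hng, hIDB⟩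
        have hlen : a0.args.length ≤ 1 := hP.2 ρ hρ a0 ha0' hIDB hng
        rcases list_len_le_one hlen with hnil | ⟨t, ht⟩
        · have happv : a0.app v = ⟨a0.rel, []⟩ := by
            unfold Atom.app; rw [hnil]; rfl
          have happv' : a0.app v' = ⟨a0.rel, []⟩ := by
            unfold Atom.app; rw [hnil]; rfl
          rw [happv'] ; rw [happv] at hbMI
          exact (hMInullary a0.rel hRU).mp hbMI
        · rcases hcf ρ hρ a0 ha0' t (ht ▸ List.mem_singleton_self t) with ⟨x, rfl⟩
          have happv : a0.app v = ⟨a0.rel, [v x]⟩ := by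
            unfold Atom.app; rw [ht]; rfl
          have happv' : a0.app v' = ⟨a0.rel, [v' x]⟩ := by
            unfold Atom.app; rw [ht]; rfl
          rw [happv'] ; rw [happv] at hbMI
          have hRγ : a0.rel ∈ γ (v x) := (hMIunary a0.rel (v x) hRU).mp hbMI
          rw [hγτ x] at hRγ
          exact (hMJunary a0.rel (v' x) hRU).mpr hRγ
      · -- EDB atom
        have hinI : a0.app v ∈ I := by
          rcases hbMI with h | ⟨hrelU, _⟩
          · exact h
          · exact absurd (hUIDB _ hrelU) hIDB
        have hargsB : ∀ cst ∈ (a0.app v).args, cst ∈ B := by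
          intro cst hcst
          rcases List.mem_map.mp hcst with ⟨t, ht, rfl⟩
          have hcstA : Term.eval v t ∈ adom I := mem_adom hinI hcst
          apply hBvB
          rw [hBv]
          exact Finset.mem_filter.mpr ⟨hcstA, a0, ha0, hIDB, t, ht, rfl⟩
        have hpfx : a0.app v' ∈ pfacts I s q M ω p := by
          rw [mem_pfacts]
          refine ⟨a0.app v, hinI, ?_, ?_⟩
          · intro cst hcst
            rw [hpB]
            exact hargsB cst hcst
          · rw [happ a0 ha0']
            rfl
        exact hsub (Finset.mem_biUnion.mpr ⟨p, hpS, hpfx⟩)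
    -- use closure of MJ
    rcases hcl ρ hρ v' hbMJ with ⟨a1, ha1, ha1MJ⟩
    have ha1' : a1 ∈ ρ.atoms := List.mem_append.mpr (Or.inl ha1)
    have hrel1 : a1.rel ∈ P.IDB := by
      rw [Program.IDB]
      exact Finset.mem_insert_of_mem (Finset.mem_biUnion.mpr
        ⟨ρ, hρ, List.mem_toFinset.mpr (List.mem_map_of_mem (f := Atom.rel) ha1)⟩)
    by_cases hgoal1 : a1.rel = P.goal
    · exfalso
      have hlen0 : a1.args.length = 0 := by
        rw [hglar a1 ha1' hgoal1, hbool]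
      have hnil : a1.args = [] := List.length_eq_zero_iff.mp hlen0
      have : a1.app v' = ⟨P.goal, []⟩ := by
        unfold Atom.app; rw [hnil, hgoal1]; rfl
      rw [this] at ha1MJ
      exact hgMJ ha1MJ
    · refine ⟨a1, ha1, ?_⟩
      have hRU : a1.rel ∈ U := Finset.mem_erase.mpr ⟨hgoal1, hrel1⟩
      have hlen : a1.args.length ≤ 1 := hP.2 ρ hρ a1 ha1' hrel1 hgoal1
      rcases list_len_le_one hlen with hnil | ⟨t, ht⟩
      · have happv : a1.app v = ⟨a1.rel, []⟩ := by
          unfold Atom.app; rw [hnil]; rfl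
        have happv' : a1.app v' = ⟨a1.rel, []⟩ := by
          unfold Atom.app; rw [hnil]; rfl
        rw [happv'] at ha1MJ ; rw [happv]
        exact (hMInullary a1.rel hRU).mpr ha1MJ
      · rcases hcf ρ hρ a1 ha1' t (ht ▸ List.mem_singleton_self t) with ⟨x, rfl⟩
        have happv : a1.app v = ⟨a1.rel, [v x]⟩ := by
          unfold Atom.app; rw [ht]; rfl
        have happv' : a1.app v' = ⟨a1.rel, [v' x]⟩ := by
          unfold Atom.app; rw [ht]; rfl
        rw [happv'] at ha1MJ ; rw [happv]
        have hRτ : a1.rel ∈ τ (v' x) := (hMJunary a1.rel (v' x) hRU).mp ha1MJ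
        rw [← hγτ x] at hRτ
        exact (hMIunary a1.rel (v x) hRU).mpr hRτ
  exact hgoalMI (hmods MI hIMI hclosed)

end Transfer

section Counting

open Finset

variable (I : Inst) (s G q M : ℕ)

noncomputable def cnt (ω : Om I s q M) (n : ℕ) : ℕ :=
  (Finset.univ.filter
    (fun pat : Pats I s q n => Valid I s q pat ∧ Realized I s q M ω pat)).card

noncomputable def Dcount (ω : Om I s q M) : ℕ := ∑ n ∈ Finset.Icc 2 G, cnt I s q M ω n

lemma card_Om : Fintype.card (Om I s q M) =
    M ^ (Fintype.card (ATy I) * Fintype.card (PId I s q)) := by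
  rw [Fintype.card_fun, Fintype.card_fun, Fintype.card_fin, ← pow_mul]

lemma card_realized {n : ℕ} (hM : 0 < M) (pat : Pats I s q n) (hv : Valid I s q pat) :
    (Finset.univ.filter (fun ω : Om I s q M => Realized I s q M ω pat)).card * M ^ n
      ≤ Fintype.card (Om I s q M) := by
  set removed : Finset (PId I s q × ATy I) :=
    Finset.univ.image (fun i : Fin n => (pat.1 i, pat.2.2 i)) with hrem
  have hreminj : Function.Injective (fun i : Fin n => (pat.1 i, pat.2.2 i)) := by
    intro i j h
    exact hv.1 (congrArg Prod.fst h)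
  have hremcard : removed.card = n := by
    rw [hrem, Finset.card_image_of_injective _ hreminj, Finset.card_univ, Fintype.card_fin]
  set z0 : Fin M := ⟨0, hM⟩ with hz0
  set zeroSet : Finset (Om I s q M) :=
    Fintype.piFinset (fun p => Fintype.piFinset (fun a =>
      if (p, a) ∈ removed then ({z0} : Finset (Fin M)) else Finset.univ)) with hzs
  have hzscard : zeroSet.card * M ^ n = Fintype.card (Om I s q M) := by
    have h1 : ∀ p : PId I s q, (Fintype.piFinset (fun a =>
        if (p, a) ∈ removed then ({z0} : Finset (Fin M)) else Finset.univ)).card =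
        ∏ a : ATy I, (if (p, a) ∈ removed then 1 else M) := by
      intro p
      rw [Fintype.card_piFinset]
      apply Finset.prod_congr rfl
      intro a _
      split <;> simp
    have h2 : zeroSet.card = ∏ x : PId I s q × ATy I, (if x ∈ removed then 1 else M) := by
      rw [hzs, Fintype.card_piFinset]
      conv_rhs => rw [Fintype.prod_prod_type]
      exact Finset.prod_congr rfl (fun p _ => h1 p)
    have h3 : (∏ x : PId I s q × ATy I, (if x ∈ removed then 1 else M)) =
        M ^ ((Finset.univ : Finset (PId I s q × ATy I)).card - n) := by
      rw [Finset.prod_ite (f := fun _ => (1 : ℕ)) (g := fun _ => M)]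
      rw [Finset.prod_const_one, one_mul, Finset.prod_const]
      congr 1
      have h4 : Finset.univ.filter (fun x : PId I s q × ATy I => ¬ x ∈ removed) =
          Finset.univ \ removed := (Finset.sdiff_eq_filter _ _).symm
      rw [h4, Finset.card_sdiff_of_subset (Finset.subset_univ _), hremcard]
    have h5 : n ≤ (Finset.univ : Finset (PId I s q × ATy I)).card := by
      rw [← hremcard]
      exact Finset.card_le_card (Finset.subset_univ _)
    calc zeroSet.card * M ^ n
        = M ^ ((Finset.univ : Finset (PId I s q × ATy I)).card - n) * M ^ n := by
          rw [h2, h3]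
      _ = M ^ ((Finset.univ : Finset (PId I s q × ATy I)).card - n + n) := (pow_add _ _ _).symm
      _ = M ^ ((Finset.univ : Finset (PId I s q × ATy I)).card) := by
          congr 1; omega
      _ = Fintype.card (Om I s q M) := by
          rw [card_Om, Finset.card_univ, Fintype.card_prod, Nat.mul_comm]
  -- the injection
  set F : Om I s q M → Om I s q M :=
    fun ω p a => if (p, a) ∈ removed then z0 else ω p a with hF
  have hmaps : ∀ ω ∈ Finset.univ.filter (fun ω : Om I s q M => Realized I s q M ω pat),
      F ω ∈ zeroSet := by
    intro ω _
    rw [hzs]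
    rw [Fintype.mem_piFinset]
    intro p
    rw [Fintype.mem_piFinset]
    intro a
    by_cases hmem : (p, a) ∈ removed
    · rw [if_pos hmem]
      have : F ω p a = z0 := by rw [hF]; simp only; rw [if_pos hmem]
      rw [this]; exact Finset.mem_singleton_self _
    · rw [if_neg hmem]; exact Finset.mem_univ _
  have hinj : Set.InjOn F ((Finset.univ.filter
      (fun ω : Om I s q M => Realized I s q M ω pat)) : Set (Om I s q M)) := by
    intro ω hω ω' hω' heq
    have hre : Realized I s q M ω pat := (Finset.mem_filter.mp (Finset.mem_coe.mp hω)).2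
    have hre' : Realized I s q M ω' pat := (Finset.mem_filter.mp (Finset.mem_coe.mp hω')).2
    funext p a
    by_cases hmem : (p, a) ∈ removed
    · rcases Finset.mem_image.mp (hrem ▸ hmem) with ⟨i, _, hi⟩
      have hp : pat.1 i = p := (Prod.mk.injEq _ _ _ _).mp hi |>.1
      have ha : pat.2.2 i = a := (Prod.mk.injEq _ _ _ _).mp hi |>.2
      have hsrc : (pat.1 (rotInv i), pat.2.1 (rotInv i)) ∉ removed := by
        intro hmem2
        rcases Finset.mem_image.mp (hrem ▸ hmem2) with ⟨j, _, hj⟩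
        have hj1 : pat.1 j = pat.1 (rotInv i) := (Prod.mk.injEq _ _ _ _).mp hj |>.1
        have hj2 : pat.2.2 j = pat.2.1 (rotInv i) := (Prod.mk.injEq _ _ _ _).mp hj |>.2
        have : j = rotInv i := hv.1 hj1
        exact hv.2 j (by rw [hj2, this])
      have hωeq : ω (pat.1 (rotInv i)) (pat.2.1 (rotInv i)) =
          ω' (pat.1 (rotInv i)) (pat.2.1 (rotInv i)) := by
        have := congrFun (congrFun heq (pat.1 (rotInv i))) (pat.2.1 (rotInv i))
        rw [hF] at this
        simp only [if_neg hsrc] at this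
        exact this
      have hchain : ω p a = ω (pat.1 (rotInv i)) (pat.2.1 (rotInv i)) := by
        have h6 := hre (rotInv i)
        rw [rot_rotInv] at h6
        rw [← hp, ← ha, ← h6]
      have hchain' : ω' p a = ω' (pat.1 (rotInv i)) (pat.2.1 (rotInv i)) := by
        have h6 := hre' (rotInv i)
        rw [rot_rotInv] at h6
        rw [← hp, ← ha, ← h6]
      rw [hchain, hchain', hωeq]
    · have := congrFun (congrFun heq p) a
      rw [hF] at this
      simp only [if_neg hmem] at this
      exact this
  have hle : (Finset.univ.filter
      (fun ω : Om I s q M => Realized I s q M ω pat)).card ≤ zeroSet.card :=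
    Finset.card_le_card_of_injOn F hmaps hinj
  calc (Finset.univ.filter (fun ω : Om I s q M => Realized I s q M ω pat)).card * M ^ n
      ≤ zeroSet.card * M ^ n := Nat.mul_le_mul_right _ hle
    _ = Fintype.card (Om I s q M) := hzscard

lemma sum_cnt_le {n : ℕ} (hM : 0 < M) :
    (∑ ω : Om I s q M, cnt I s q M ω n) * M ^ n ≤
      Fintype.card (Pats I s q n) * Fintype.card (Om I s q M) := by
  have hswap : ∑ ω : Om I s q M, cnt I s q M ω n =
      ∑ pat : Pats I s q n, (Finset.univ.filter
        (fun ω : Om I s q M => Valid I s q pat ∧ Realized I s q M ω pat)).card := by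
    unfold cnt
    simp only [Finset.card_filter]
    rw [Finset.sum_comm]
  rw [hswap, Finset.sum_mul]
  have hbound : ∀ pat : Pats I s q n, (Finset.univ.filter
      (fun ω : Om I s q M => Valid I s q pat ∧ Realized I s q M ω pat)).card * M ^ n
        ≤ Fintype.card (Om I s q M) := by
    intro pat
    by_cases hv : Valid I s q pat
    · refine le_trans (Nat.mul_le_mul_right _ (Finset.card_le_card ?_))
        (card_realized I s q M hM pat hv)
      intro ω hω
      exact Finset.mem_filter.mpr ⟨Finset.mem_univ _, (Finset.mem_filter.mp hω).2.2⟩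
    · have hemp : (Finset.univ.filter
          (fun ω : Om I s q M => Valid I s q pat ∧ Realized I s q M ω pat)) = ∅ :=
        Finset.eq_empty_iff_forall_notMem.mpr
          (fun ω hω => hv (Finset.mem_filter.mp hω).2.1)
      rw [hemp]
      simp
  calc ∑ pat : Pats I s q n, (Finset.univ.filter
        (fun ω : Om I s q M => Valid I s q pat ∧ Realized I s q M ω pat)).card * M ^ n
      ≤ ∑ _pat : Pats I s q n, Fintype.card (Om I s q M) :=
        Finset.sum_le_sum (fun pat _ => hbound pat)
    _ = Fintype.card (Pats I s q n) * Fintype.card (Om I s q M) := by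
        rw [Finset.sum_const, Finset.card_univ, smul_eq_mul]

lemma card_pats (n : ℕ) : Fintype.card (Pats I s q n) =
    (Fintype.card (PId I s q) * (Fintype.card (ATy I) * Fintype.card (ATy I))) ^ n := by
  simp [Fintype.card_prod, Fintype.card_fun, Fintype.card_fin, mul_pow]

/-- Parts touched by some realized valid pattern. -/
noncomputable def Dirty (ω : Om I s q M) : Finset (PId I s q) :=
  Finset.univ.filter (fun p => ¬ Clean I s G q M ω p)

lemma dirty_card_le (ω : Om I s q M) :
    (Dirty I s G q M ω).card ≤ G * Dcount I s G q M ω := by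
  classical
  have hsub : Dirty I s G q M ω ⊆ (Finset.Icc 2 G).biUnion (fun n =>
      (Finset.univ.filter (fun pat : Pats I s q n =>
        Valid I s q pat ∧ Realized I s q M ω pat)).biUnion (fun pat =>
        Finset.univ.filter (fun p => ∃ i, pat.1 i = p))) := by
    intro p hp
    have hnc : ¬ Clean I s G q M ω p := by
      have := Finset.mem_filter.mp hp
      exact this.2
    rw [Clean] at hnc
    push_neg at hnc
    obtain ⟨n, h2n, pat, hvp, hrp, i, hip⟩ := hnc
    refine Finset.mem_biUnion.mpr ⟨n.val, Finset.mem_Icc.mpr ⟨h2n, by omega⟩, ?_⟩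
    refine Finset.mem_biUnion.mpr ⟨pat, Finset.mem_filter.mpr ⟨Finset.mem_univ _, hvp, hrp⟩, ?_⟩
    exact Finset.mem_filter.mpr ⟨Finset.mem_univ _, i, hip⟩
  calc (Dirty I s G q M ω).card
      ≤ ∑ n ∈ Finset.Icc 2 G, ((Finset.univ.filter (fun pat : Pats I s q n =>
          Valid I s q pat ∧ Realized I s q M ω pat)).biUnion (fun pat =>
          Finset.univ.filter (fun p => ∃ i, pat.1 i = p))).card :=
        le_trans (Finset.card_le_card hsub) (Finset.card_biUnion_le)
    _ ≤ ∑ n ∈ Finset.Icc 2 G, G * cnt I s q M ω n := by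
        apply Finset.sum_le_sum
        intro n hn
        have h1 : ∀ pat : Pats I s q n,
            (Finset.univ.filter (fun p => ∃ i, pat.1 i = p)).card ≤ G := by
          intro pat
          have h2 : Finset.univ.filter (fun p => ∃ i, pat.1 i = p) ⊆
              Finset.univ.image pat.1 := by
            intro p hp
            obtain ⟨i, hi⟩ := (Finset.mem_filter.mp hp).2
            exact Finset.mem_image.mpr ⟨i, Finset.mem_univ _, hi⟩
          calc (Finset.univ.filter (fun p => ∃ i, pat.1 i = p)).card
              ≤ (Finset.univ.image pat.1).card := Finset.card_le_card h2
            _ ≤ (Finset.univ : Finset (Fin n)).card := Finset.card_image_le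
            _ = n := by rw [Finset.card_univ, Fintype.card_fin]
            _ ≤ G := (Finset.mem_Icc.mp hn).2
        calc ((Finset.univ.filter (fun pat : Pats I s q n =>
            Valid I s q pat ∧ Realized I s q M ω pat)).biUnion (fun pat =>
            Finset.univ.filter (fun p => ∃ i, pat.1 i = p))).card
            ≤ ∑ pat ∈ (Finset.univ.filter (fun pat : Pats I s q n =>
                Valid I s q pat ∧ Realized I s q M ω pat)),
                  (Finset.univ.filter (fun p => ∃ i, pat.1 i = p)).card :=
              Finset.card_biUnion_le
          _ ≤ ∑ _pat ∈ (Finset.univ.filter (fun pat : Pats I s q n =>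
                Valid I s q pat ∧ Realized I s q M ω pat)), G :=
              Finset.sum_le_sum (fun pat _ => h1 pat)
          _ = G * cnt I s q M ω n := by
              rw [Finset.sum_const, smul_eq_mul, cnt, Nat.mul_comm]
    _ = G * Dcount I s G q M ω := by rw [Dcount, Finset.mul_sum]

end Counting

section Tail

open Finset

lemma pow_succ_lower (x n : ℕ) : x ^ (n + 1) + (n + 1) * x ^ n ≤ (x + 1) ^ (n + 1) := by
  induction n with
  | zero => simp [pow_succ]
  | succ n ih =>
      have h := Nat.mul_le_mul_right (x + 1) ih
      have expand : (x ^ (n + 1) + (n + 1) * x ^ n) * (x + 1) =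
          x ^ (n + 2) + (n + 2) * x ^ (n + 1) + (n + 1) * x ^ n := by ring
      calc x ^ (n + 2) + (n + 2) * x ^ (n + 1)
          ≤ x ^ (n + 2) + (n + 2) * x ^ (n + 1) + (n + 1) * x ^ n := Nat.le_add_right _ _
        _ = (x ^ (n + 1) + (n + 1) * x ^ n) * (x + 1) := expand.symm
        _ ≤ (x + 1) ^ (n + 1) * (x + 1) := h
        _ = (x + 1) ^ (n + 2) := by ring

/-- The basic Bernoulli-type inequality for the bad-block count. -/
lemma bad_pow_le {b m KK : ℕ} (hKK : 1 ≤ KK) (hkey : KK * b ≤ (KK - 1) * m) :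
    2 * b ^ (2 * KK) ≤ m ^ (2 * KK) := by
  by_cases hb0 : b = 0
  · subst hb0
    rw [zero_pow (by omega)]
    simp
  · have hb1 : 1 ≤ b := Nat.one_le_iff_ne_zero.mpr hb0
    have hKK2 : 2 ≤ KK := by
      rcases Nat.lt_or_ge KK 2 with h | h
      · exfalso
        have h1 : KK = 1 := by omega
        rw [h1] at hkey
        simp at hkey
        omega
      · exact h
    -- 2 * (KK-1)^(2KK) ≤ KK^(2KK)
    have hmain : 2 * (KK - 1) ^ (2 * KK) ≤ KK ^ (2 * KK) := by
      set x := KK - 1 with hx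
      obtain ⟨e, he⟩ : ∃ e, 2 * KK = e + 1 := ⟨2 * KK - 1, by omega⟩
      have h2 : x ^ (e + 1) ≤ (e + 1) * x ^ e := by
        calc x ^ (e + 1) = x * x ^ e := by rw [pow_succ]; ring
          _ ≤ (e + 1) * x ^ e := Nat.mul_le_mul_right _ (by omega)
      calc 2 * x ^ (2 * KK) = x ^ (e + 1) + x ^ (e + 1) := by rw [he]; ring
        _ ≤ x ^ (e + 1) + (e + 1) * x ^ e := Nat.add_le_add_left h2 _
        _ ≤ (x + 1) ^ (e + 1) := pow_succ_lower x e
        _ = KK ^ (2 * KK) := by rw [he]; congr 1; omega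
    have hKpos : 0 < KK ^ (2 * KK) := Nat.pow_pos (by omega)
    have hchain : (2 * b ^ (2 * KK)) * KK ^ (2 * KK) ≤ m ^ (2 * KK) * KK ^ (2 * KK) := by
      calc (2 * b ^ (2 * KK)) * KK ^ (2 * KK) = 2 * (KK * b) ^ (2 * KK) := by
            rw [mul_pow]; ring
        _ ≤ 2 * ((KK - 1) * m) ^ (2 * KK) :=
            Nat.mul_le_mul_left _ (Nat.pow_le_pow_left hkey _)
        _ = 2 * (KK - 1) ^ (2 * KK) * m ^ (2 * KK) := by rw [mul_pow]; ring
        _ ≤ KK ^ (2 * KK) * m ^ (2 * KK) := Nat.mul_le_mul_right _ hmain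
        _ = m ^ (2 * KK) * KK ^ (2 * KK) := by ring
    exact Nat.le_of_mul_le_mul_right hchain hKpos

variable (I : Inst) (s G q M : ℕ)

noncomputable def hitsSet (ω : Om I s q M) (B : ShapeTy I s)
    (SS : ATy I → Finset (Fin M)) : Finset (Fin q) :=
  Finset.univ.filter (fun j => ∀ a, ω (B, j) a ∈ SS a)

noncomputable def BadBlk (SS : ATy I → Finset (Fin M)) : Finset (ATy I → Fin M) :=
  Finset.univ.filter (fun blk => ¬ ∀ a, blk a ∈ SS a)

lemma badblk_key {C : ℕ} (hC : 0 < C) (SS : ATy I → Finset (Fin M))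
    (hSS : ∀ a, M ≤ C * (SS a).card) :
    C ^ (Fintype.card (ATy I)) * (BadBlk I M SS).card ≤
      (C ^ (Fintype.card (ATy I)) - 1) * M ^ (Fintype.card (ATy I)) := by
  set KK := C ^ (Fintype.card (ATy I)) with hKKdef
  set m := M ^ (Fintype.card (ATy I)) with hmdef
  set b := (BadBlk I M SS).card with hbdef
  have hKK1 : 1 ≤ KK := Nat.one_le_pow _ _ hC
  set h := ∏ a : ATy I, (SS a).card with hhdef
  have hgood : (Finset.univ.filter (fun blk : ATy I → Fin M => ∀ a, blk a ∈ SS a)).card = h := by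
    have hset : (Finset.univ.filter (fun blk : ATy I → Fin M => ∀ a, blk a ∈ SS a)) =
        Fintype.piFinset SS := by
      ext blk
      simp [Fintype.mem_piFinset]
    rw [hset, Fintype.card_piFinset]
  have hbh : h + b = m := by
    rw [hbdef, ← hgood, hmdef]
    unfold BadBlk
    rw [Finset.card_filter_add_card_filter_not]
    rw [Finset.card_univ, Fintype.card_fun, Fintype.card_fin]
  have hm : m ≤ KK * h := by
    rw [hmdef, hKKdef, hhdef]
    calc M ^ (Fintype.card (ATy I)) = ∏ _a : ATy I, M := by
          simp
      _ ≤ ∏ a : ATy I, (C * (SS a).card) := Finset.prod_le_prod' (fun a _ => hSS a)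
      _ = (∏ _a : ATy I, C) * ∏ a : ATy I, (SS a).card := Finset.prod_mul_distrib
      _ = C ^ (Fintype.card (ATy I)) * ∏ a : ATy I, (SS a).card := by
          simp
  have e1 : KK * b + KK * h = KK * m := by
    rw [← Nat.mul_add, Nat.add_comm b h, hbh]
  have e3 : (KK - 1) * m + m = KK * m := by
    have : KK - 1 + 1 = KK := Nat.succ_pred_eq_of_pos hKK1
    calc (KK - 1) * m + m = (KK - 1 + 1) * m := by ring
      _ = KK * m := by rw [this]
  calc KK * b = KK * m - KK * h := Nat.eq_sub_of_add_eq e1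
    _ ≤ KK * m - m := Nat.sub_le_sub_left hm _
    _ = (KK - 1) * m := (Nat.eq_sub_of_add_eq e3).symm

lemma badblk_pow {C : ℕ} (hC : 0 < C) (SS : ATy I → Finset (Fin M))
    (hSS : ∀ a, M ≤ C * (SS a).card) :
    2 * (BadBlk I M SS).card ^ (2 * C ^ (Fintype.card (ATy I))) ≤
      (M ^ (Fintype.card (ATy I))) ^ (2 * C ^ (Fintype.card (ATy I))) :=
  bad_pow_le (Nat.one_le_pow _ _ hC) (badblk_key I M hC SS hSS)

end Tail

section Tail2

open Finset

variable (I : Inst) (s G q M : ℕ)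

lemma count_smallsets (W : ℕ) (hq1 : 1 ≤ q) :
    ((Finset.univ : Finset (Fin q)).powerset.filter (fun H => H.card ≤ W)).card ≤
      (W + 1) * q ^ W := by
  have hsub : (Finset.univ : Finset (Fin q)).powerset.filter (fun H => H.card ≤ W) ⊆
      (Finset.range (W + 1)).biUnion
        (fun i => Finset.powersetCard i (Finset.univ : Finset (Fin q))) := by
    intro H hH
    rcases Finset.mem_filter.mp hH with ⟨_, hc⟩
    exact Finset.mem_biUnion.mpr ⟨H.card, Finset.mem_range.mpr (by omega),
      Finset.mem_powersetCard.mpr ⟨Finset.subset_univ _, rfl⟩⟩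
  calc ((Finset.univ : Finset (Fin q)).powerset.filter (fun H => H.card ≤ W)).card
      ≤ ∑ i ∈ Finset.range (W + 1),
          (Finset.powersetCard i (Finset.univ : Finset (Fin q))).card :=
        le_trans (Finset.card_le_card hsub) Finset.card_biUnion_le
    _ ≤ ∑ _i ∈ Finset.range (W + 1), q ^ W := by
        apply Finset.sum_le_sum
        intro i hi
        rw [Finset.card_powersetCard, Finset.card_univ, Fintype.card_fin]
        calc q.choose i ≤ q ^ i := Nat.choose_le_pow q i
          _ ≤ q ^ W := Nat.pow_le_pow_right hq1 (by
              have := Finset.mem_range.mp hi; omega)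
    _ = (W + 1) * q ^ W := by rw [Finset.sum_const, Finset.card_range, smul_eq_mul]

lemma tailset_le (B : ShapeTy I s) (SS : ATy I → Finset (Fin M)) (W q1 KK : ℕ)
    (hq : q = 2 * KK * q1 + W)
    (hb2 : 2 * (BadBlk I M SS).card ^ (2 * KK) ≤
      (M ^ (Fintype.card (ATy I))) ^ (2 * KK))
    (hqQ : q ≤ Fintype.card (PId I s q)) (hq1 : 1 ≤ q) :
    (Finset.univ.filter (fun ω : Om I s q M =>
      (hitsSet I s q M ω B SS).card ≤ W)).card * 2 ^ q1 ≤
      ((W + 1) * q ^ W) * Fintype.card (Om I s q M) := by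
  classical
  set b := (BadBlk I M SS).card with hbdef
  set m := M ^ (Fintype.card (ATy I)) with hmdef
  set Q := Fintype.card (PId I s q) with hQdef
  have hbm : b ≤ m := by
    rw [hbdef, hmdef]
    calc (BadBlk I M SS).card ≤ (Finset.univ : Finset (ATy I → Fin M)).card :=
          Finset.card_le_card (Finset.filter_subset _ _)
      _ = M ^ (Fintype.card (ATy I)) := by
          rw [Finset.card_univ, Fintype.card_fun, Fintype.card_fin]
  have hOm : Fintype.card (Om I s q M) = m ^ Q := by
    rw [card_Om, hmdef, hQdef, pow_mul]
  set EH : Finset (Fin q) → Finset (Om I s q M) := fun H =>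
    Fintype.piFinset (fun p : PId I s q =>
      if p.1 = B ∧ p.2 ∉ H then BadBlk I M SS else Finset.univ) with hEH
  have hsub : Finset.univ.filter (fun ω : Om I s q M =>
      (hitsSet I s q M ω B SS).card ≤ W) ⊆
      ((Finset.univ : Finset (Fin q)).powerset.filter (fun H => H.card ≤ W)).biUnion EH := by
    intro ω hω
    have hcard := (Finset.mem_filter.mp hω).2
    refine Finset.mem_biUnion.mpr ⟨hitsSet I s q M ω B SS,
      Finset.mem_filter.mpr ⟨Finset.mem_powerset.mpr (Finset.subset_univ _), hcard⟩, ?_⟩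
    rw [hEH]
    rw [Fintype.mem_piFinset]
    intro p
    by_cases hcond : p.1 = B ∧ p.2 ∉ hitsSet I s q M ω B SS
    · rw [if_pos hcond]
      unfold BadBlk
      refine Finset.mem_filter.mpr ⟨Finset.mem_univ _, ?_⟩
      intro hall
      apply hcond.2
      unfold hitsSet
      refine Finset.mem_filter.mpr ⟨Finset.mem_univ _, ?_⟩
      intro a
      have hpeq : p = (B, p.2) := by
        rw [← hcond.1]
      rw [hpeq] at hall
      exact hall a
    · rw [if_neg hcond]
      exact Finset.mem_univ _
  have hEHcard : ∀ H ∈ (Finset.univ : Finset (Fin q)).powerset.filter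
      (fun H => H.card ≤ W), (EH H).card * 2 ^ q1 ≤ m ^ Q := by
    intro H hH
    have hHW : H.card ≤ W := (Finset.mem_filter.mp hH).2
    set c1 := (Finset.univ.filter
      (fun p : PId I s q => p.1 = B ∧ p.2 ∉ H)).card with hc1
    have hc1eq : c1 = q - H.card := by
      rw [hc1, ← Finset.univ_product_univ,
        Finset.filter_product (fun x : ShapeTy I s => x = B) (fun j : Fin q => j ∉ H)]
      rw [Finset.card_product]
      have h1 : (Finset.univ.filter (fun x : ShapeTy I s => x = B)) = {B} := by
        rw [Finset.filter_eq']
        simp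
      have h2 : (Finset.univ.filter (fun j : Fin q => j ∉ H)).card = q - H.card := by
        have h3 : Finset.univ.filter (fun j : Fin q => j ∉ H) = Finset.univ \ H :=
          (Finset.sdiff_eq_filter _ _).symm
        rw [h3, Finset.card_sdiff_of_subset (Finset.subset_univ _), Finset.card_univ, Fintype.card_fin]
      rw [h1, h2]
      simp
    have hc1le : c1 ≤ Q := by
      rw [hc1, hQdef, ← Finset.card_univ]
      exact Finset.card_le_card (Finset.filter_subset _ _)
    have hcardEH : (EH H).card = b ^ c1 * m ^ (Q - c1) := by
      rw [hEH, Fintype.card_piFinset]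
      have h4 : ∀ p : PId I s q, (if p.1 = B ∧ p.2 ∉ H then BadBlk I M SS
          else (Finset.univ : Finset (ATy I → Fin M))).card =
          if p.1 = B ∧ p.2 ∉ H then b else m := by
        intro p
        split
        · rfl
        · rw [Finset.card_univ, Fintype.card_fun, Fintype.card_fin, hmdef]
      calc ∏ p : PId I s q, (if p.1 = B ∧ p.2 ∉ H then BadBlk I M SS
            else (Finset.univ : Finset (ATy I → Fin M))).card
          = ∏ p : PId I s q, (if p.1 = B ∧ p.2 ∉ H then b else m) :=
            Finset.prod_congr rfl (fun p _ => h4 p)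
        _ = b ^ c1 * m ^ (Q - c1) := by
            have h5 := Finset.card_filter_add_card_filter_not
              (s := (Finset.univ : Finset (PId I s q)))
              (p := fun p => p.1 = B ∧ p.2 ∉ H)
            rw [Finset.card_univ] at h5
            rw [← hc1] at h5
            have hneg : (Finset.univ.filter
                (fun p : PId I s q => ¬(p.1 = B ∧ p.2 ∉ H))).card = Q - c1 := by
              omega
            rw [Finset.prod_ite (f := fun _ => b) (g := fun _ => m),
              Finset.prod_const, Finset.prod_const, ← hc1, hneg]
    -- numeric bound on b ^ c1 * m ^ (Q - c1) * 2 ^ q1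
    rw [hcardEH]
    have hdec : c1 = 2 * KK * q1 + (W - H.card) := by omega
    have hstep : b ^ (2 * KK * q1) * 2 ^ q1 ≤ m ^ (2 * KK * q1) := by
      have h6 : (2 * b ^ (2 * KK)) ^ q1 ≤ (m ^ (2 * KK)) ^ q1 :=
        Nat.pow_le_pow_left hb2 q1
      calc b ^ (2 * KK * q1) * 2 ^ q1
          = (2 * b ^ (2 * KK)) ^ q1 := by
            rw [mul_pow, ← pow_mul]; ring
        _ ≤ (m ^ (2 * KK)) ^ q1 := h6
        _ = m ^ (2 * KK * q1) := by rw [← pow_mul]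
    calc b ^ c1 * m ^ (Q - c1) * 2 ^ q1
        = (b ^ (2 * KK * q1) * 2 ^ q1) * b ^ (W - H.card) * m ^ (Q - c1) := by
          rw [hdec, pow_add]; ring
      _ ≤ (m ^ (2 * KK * q1)) * m ^ (W - H.card) * m ^ (Q - c1) := by
          refine Nat.mul_le_mul_right _ (Nat.mul_le_mul hstep ?_)
          exact Nat.pow_le_pow_left hbm _
      _ = m ^ (2 * KK * q1 + (W - H.card)) * m ^ (Q - c1) := by rw [pow_add]
      _ = m ^ (c1 + (Q - c1)) := by rw [← hdec, pow_add]
      _ = m ^ Q := by congr 1; omega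
  calc (Finset.univ.filter (fun ω : Om I s q M =>
        (hitsSet I s q M ω B SS).card ≤ W)).card * 2 ^ q1
      ≤ (((Finset.univ : Finset (Fin q)).powerset.filter
          (fun H => H.card ≤ W)).biUnion EH).card * 2 ^ q1 :=
        Nat.mul_le_mul_right _ (Finset.card_le_card hsub)
    _ ≤ (∑ H ∈ (Finset.univ : Finset (Fin q)).powerset.filter
          (fun H => H.card ≤ W), (EH H).card) * 2 ^ q1 :=
        Nat.mul_le_mul_right _ Finset.card_biUnion_le
    _ = ∑ H ∈ (Finset.univ : Finset (Fin q)).powerset.filter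
          (fun H => H.card ≤ W), (EH H).card * 2 ^ q1 := by
        rw [Finset.sum_mul]
    _ ≤ ∑ _H ∈ (Finset.univ : Finset (Fin q)).powerset.filter
          (fun H => H.card ≤ W), m ^ Q := Finset.sum_le_sum hEHcard
    _ = ((Finset.univ : Finset (Fin q)).powerset.filter
          (fun H => H.card ≤ W)).card * m ^ Q := by
        rw [Finset.sum_const, smul_eq_mul]
    _ ≤ ((W + 1) * q ^ W) * m ^ Q :=
        Nat.mul_le_mul_right _ (count_smallsets q W hq1)
    _ = ((W + 1) * q ^ W) * Fintype.card (Om I s q M) := by rw [hOm]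

lemma bad2_le (C W q1 KK : ℕ) (hC : 0 < C) (hKK : KK = C ^ (Fintype.card (ATy I)))
    (hq : q = 2 * KK * q1 + W) (hqQ : q ≤ Fintype.card (PId I s q)) (hq1 : 1 ≤ q) :
    (Finset.univ.filter (fun ω : Om I s q M => ∃ B : ShapeTy I s,
      ∃ SS : ATy I → Finset (Fin M), (∀ a, M ≤ C * (SS a).card) ∧
        (hitsSet I s q M ω B SS).card ≤ W)).card * 2 ^ q1 ≤
      (Fintype.card (ShapeTy I s) * Fintype.card (ATy I → Finset (Fin M)) *
        ((W + 1) * q ^ W)) * Fintype.card (Om I s q M) := by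
  classical
  set T : ShapeTy I s × (ATy I → Finset (Fin M)) → Finset (Om I s q M) := fun BS =>
    if (∀ a, M ≤ C * (BS.2 a).card) then
      Finset.univ.filter (fun ω : Om I s q M => (hitsSet I s q M ω BS.1 BS.2).card ≤ W)
    else ∅ with hT
  have hsub : Finset.univ.filter (fun ω : Om I s q M => ∃ B : ShapeTy I s,
      ∃ SS : ATy I → Finset (Fin M), (∀ a, M ≤ C * (SS a).card) ∧
        (hitsSet I s q M ω B SS).card ≤ W) ⊆
      (Finset.univ : Finset (ShapeTy I s × (ATy I → Finset (Fin M)))).biUnion T := by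
    intro ω hω
    obtain ⟨B, SS, hlarge, hhits⟩ := (Finset.mem_filter.mp hω).2
    refine Finset.mem_biUnion.mpr ⟨(B, SS), Finset.mem_univ _, ?_⟩
    rw [hT]
    simp only [if_pos hlarge]
    exact Finset.mem_filter.mpr ⟨Finset.mem_univ _, hhits⟩
  have hTcard : ∀ BS : ShapeTy I s × (ATy I → Finset (Fin M)),
      (T BS).card * 2 ^ q1 ≤ ((W + 1) * q ^ W) * Fintype.card (Om I s q M) := by
    intro BS
    rw [hT]
    by_cases hl : ∀ a, M ≤ C * (BS.2 a).card
    · simp only [if_pos hl]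
      refine tailset_le I s q M BS.1 BS.2 W q1 KK hq ?_ hqQ hq1
      rw [hKK]
      exact badblk_pow I M hC BS.2 hl
    · simp only [if_neg hl]
      simp
  calc (Finset.univ.filter (fun ω : Om I s q M => ∃ B : ShapeTy I s,
        ∃ SS : ATy I → Finset (Fin M), (∀ a, M ≤ C * (SS a).card) ∧
          (hitsSet I s q M ω B SS).card ≤ W)).card * 2 ^ q1
      ≤ ((Finset.univ : Finset (ShapeTy I s × (ATy I → Finset (Fin M)))).biUnion T).card
          * 2 ^ q1 := Nat.mul_le_mul_right _ (Finset.card_le_card hsub)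
    _ ≤ (∑ BS ∈ (Finset.univ : Finset (ShapeTy I s × (ATy I → Finset (Fin M)))),
          (T BS).card) * 2 ^ q1 := Nat.mul_le_mul_right _ Finset.card_biUnion_le
    _ = ∑ BS ∈ (Finset.univ : Finset (ShapeTy I s × (ATy I → Finset (Fin M)))),
          (T BS).card * 2 ^ q1 := by rw [Finset.sum_mul]
    _ ≤ ∑ _BS ∈ (Finset.univ : Finset (ShapeTy I s × (ATy I → Finset (Fin M)))),
          ((W + 1) * q ^ W) * Fintype.card (Om I s q M) :=
        Finset.sum_le_sum (fun BS _ => hTcard BS)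
    _ = (Fintype.card (ShapeTy I s) * Fintype.card (ATy I → Finset (Fin M)) *
          ((W + 1) * q ^ W)) * Fintype.card (Om I s q M) := by
        rw [Finset.sum_const, Finset.card_univ, smul_eq_mul, Fintype.card_prod]
        ring

end Tail2

section Numerics

lemma two_mul_le_two_pow {x : ℕ} (hx : 1 ≤ x) : 2 * x ≤ 2 ^ x := by
  induction x with
  | zero => omega
  | succ n ih =>
      rcases Nat.eq_or_lt_of_le hx with h | h
      · rw [← h]; omega
      · have hn : 1 ≤ n := by omega
        have h2 : 2 ≤ 2 ^ n := by
          calc 2 = 2 ^ 1 := (pow_one 2).symm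
            _ ≤ 2 ^ n := Nat.pow_le_pow_right (by omega) hn
        calc 2 * (n + 1) = 2 * n + 2 := by ring
          _ ≤ 2 ^ n + 2 ^ n := Nat.add_le_add (ih hn) h2
          _ = 2 ^ (n + 1) := by rw [pow_succ]; ring

lemma linear_le_two_pow (a b : ℕ) : ∃ t, 1 ≤ t ∧ a * t + b ≤ 2 ^ t := by
  set x := a + b + 1 with hx
  refine ⟨2 * x, by omega, ?_⟩
  have hx1 : 1 ≤ x := by omega
  have h1 : a * (2 * x) + b ≤ 2 * x * x := by nlinarith
  have h2 : 2 * x * x ≤ 2 ^ x * x := Nat.mul_le_mul_right _ (two_mul_le_two_pow hx1)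
  have h3 : 2 ^ x * x ≤ 2 ^ x * 2 ^ x :=
    Nat.mul_le_mul_left _ (le_of_lt ((Nat.lt_two_pow_self (n := x))))
  calc a * (2 * x) + b ≤ 2 * x * x := h1
    _ ≤ 2 ^ x * 2 ^ x := le_trans h2 h3
    _ = 2 ^ (2 * x) := by rw [← pow_add]; congr 1; ring

end Numerics

section ExistsGood

open Finset

lemma exists_good (I : Inst) (s G C : ℕ) (hC : 0 < C) (hG2 : 2 ≤ G) (hs : 0 < s)
    (hA : (adom I).Nonempty) :
    ∃ (M q : ℕ), 0 < M ∧ ∃ ω : Om I s q M,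
      ∀ B : ShapeTy I s, ∀ SS : ATy I → Finset (Fin M),
        (∀ a, M ≤ C * (SS a).card) →
        ∃ p : PId I s q, p.1 = B ∧ p ∈ Surv I s G q M ω ∧ ∀ a, ω p a ∈ SS a := by
  classical
  set nA := Fintype.card (ATy I) with hnA
  set KK := C ^ nA with hKK
  set NB := (Shapes I s).card with hNB
  set c5 := 2 * KK * (nA + 2) + 1 with hc5
  set Y := c5 * NB * (nA * nA) + 2 with hY
  set D := G * Y ^ G with hD
  set W := 2 * G * D with hW
  set E0 := 2 * NB * (W + 1) * c5 ^ W with hE0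
  obtain ⟨t, ht1, ht⟩ := linear_le_two_pow W (W + E0)
  set M := 2 ^ t with hM
  have hMpos : 0 < M := Nat.pow_pos (by omega)
  set q1 := M * (nA + 2) with hq1def
  set q := 2 * KK * q1 + W with hqdef
  have hKK1 : 1 ≤ KK := Nat.one_le_pow _ _ hC
  have hWM : W ≤ M := by
    have := (Nat.lt_two_pow_self (n := t))
    omega
  have hE0M : E0 ≤ M := by omega
  have htW : t * W ≤ M := by
    have h0 : W * t ≤ M := by omega
    calc t * W = W * t := Nat.mul_comm _ _
      _ ≤ M := h0
  have hq1pos : 1 ≤ q1 := by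
    rw [hq1def]
    exact Nat.one_le_iff_ne_zero.mpr (Nat.mul_ne_zero (by omega) (by omega))
  have hqpos : 1 ≤ q := by
    rw [hqdef]
    have h0 : 1 ≤ 2 * KK * q1 := by
      have h1 : 2 * KK * q1 ≠ 0 := Nat.mul_ne_zero (by omega) (by omega)
      omega
    omega
  have hqc5 : q ≤ c5 * M := by
    rw [hqdef, hq1def, hc5]
    calc 2 * KK * (M * (nA + 2)) + W ≤ 2 * KK * (nA + 2) * M + M := by
          have : 2 * KK * (M * (nA + 2)) = 2 * KK * (nA + 2) * M := by ring
          omega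
      _ = (2 * KK * (nA + 2) + 1) * M := by ring
  have hShapesNe : (Shapes I s).Nonempty := by
    obtain ⟨a, ha⟩ := hA
    refine ⟨{a}, ?_⟩
    rw [Shapes, Finset.mem_filter, Finset.mem_powerset]
    refine ⟨?_, ⟨a, Finset.mem_singleton_self a⟩, ?_⟩
    · intro x hx
      rw [Finset.mem_singleton] at hx
      exact hx ▸ ha
    · rw [Finset.card_singleton]; omega
  have hNB1 : 1 ≤ NB := Finset.card_pos.mpr hShapesNe
  have hcardShape : Fintype.card (ShapeTy I s) = NB := by
    rw [hNB]
    exact Fintype.card_coe _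
  have hQ : Fintype.card (PId I s q) = NB * q := by
    rw [Fintype.card_prod, hcardShape, Fintype.card_fin]
  have hqQ : q ≤ Fintype.card (PId I s q) := by
    rw [hQ]
    calc q = 1 * q := (Nat.one_mul q).symm
      _ ≤ NB * q := Nat.mul_le_mul_right _ hNB1
  have hY2 : 2 ≤ Y := by omega
  have hcardOmpos : 0 < Fintype.card (Om I s q M) := by
    rw [card_Om]
    exact Nat.pow_pos hMpos
  -- Markov bound for defect counts
  have hQY : Fintype.card (PId I s q) * (nA * nA) ≤ Y * M := by
    rw [hQ]
    calc NB * q * (nA * nA) ≤ NB * (c5 * M) * (nA * nA) := by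
          exact Nat.mul_le_mul_right _ (Nat.mul_le_mul_left _ hqc5)
      _ = (c5 * NB * (nA * nA)) * M := by ring
      _ ≤ Y * M := Nat.mul_le_mul_right _ (by omega)
  have hsumD : ∑ ω : Om I s q M, Dcount I s G q M ω ≤ D * Fintype.card (Om I s q M) := by
    have hswap : ∑ ω : Om I s q M, Dcount I s G q M ω =
        ∑ n ∈ Finset.Icc 2 G, ∑ ω : Om I s q M, cnt I s q M ω n := by
      unfold Dcount
      rw [Finset.sum_comm]
    rw [hswap]
    have hpern : ∀ n ∈ Finset.Icc 2 G,
        ∑ ω : Om I s q M, cnt I s q M ω n ≤ Y ^ G * Fintype.card (Om I s q M) := by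
      intro n hn
      obtain ⟨h2n, hnG⟩ := Finset.mem_Icc.mp hn
      have h1 := sum_cnt_le I s q M (n := n) hMpos
      have h2 : Fintype.card (Pats I s q n) ≤ Y ^ n * M ^ n := by
        rw [card_pats]
        calc (Fintype.card (PId I s q) * (nA * nA)) ^ n ≤ (Y * M) ^ n :=
              Nat.pow_le_pow_left hQY n
          _ = Y ^ n * M ^ n := mul_pow _ _ _
      have h3 : (∑ ω : Om I s q M, cnt I s q M ω n) * M ^ n ≤
          (Y ^ n * Fintype.card (Om I s q M)) * M ^ n := by
        calc (∑ ω : Om I s q M, cnt I s q M ω n) * M ^ n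
            ≤ Fintype.card (Pats I s q n) * Fintype.card (Om I s q M) := h1
          _ ≤ Y ^ n * M ^ n * Fintype.card (Om I s q M) :=
              Nat.mul_le_mul_right _ h2
          _ = (Y ^ n * Fintype.card (Om I s q M)) * M ^ n := by ring
      have h4 : ∑ ω : Om I s q M, cnt I s q M ω n ≤ Y ^ n * Fintype.card (Om I s q M) :=
        Nat.le_of_mul_le_mul_right h3 (Nat.pow_pos hMpos)
      calc ∑ ω : Om I s q M, cnt I s q M ω n ≤ Y ^ n * Fintype.card (Om I s q M) := h4
        _ ≤ Y ^ G * Fintype.card (Om I s q M) :=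
            Nat.mul_le_mul_right _ (Nat.pow_le_pow_right (by omega) hnG)
    calc ∑ n ∈ Finset.Icc 2 G, ∑ ω : Om I s q M, cnt I s q M ω n
        ≤ ∑ _n ∈ Finset.Icc 2 G, Y ^ G * Fintype.card (Om I s q M) :=
          Finset.sum_le_sum hpern
      _ = (Finset.Icc 2 G).card * (Y ^ G * Fintype.card (Om I s q M)) := by
          rw [Finset.sum_const, smul_eq_mul]
      _ ≤ G * (Y ^ G * Fintype.card (Om I s q M)) := by
          refine Nat.mul_le_mul_right _ ?_
          rw [Nat.card_Icc]
          omega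
      _ = D * Fintype.card (Om I s q M) := by rw [hD]; ring
  set bad1 : Finset (Om I s q M) :=
    Finset.univ.filter (fun ω => 2 * D < Dcount I s G q M ω) with hbad1def
  clear_value bad1
  have hbad1 : 2 * bad1.card < Fintype.card (Om I s q M) := by
    have h1 : bad1.card * (2 * D + 1) ≤ ∑ ω : Om I s q M, Dcount I s G q M ω := by
      calc bad1.card * (2 * D + 1) = bad1.card • (2 * D + 1) := by rw [smul_eq_mul]
        _ ≤ ∑ ω ∈ bad1, Dcount I s G q M ω := by
            refine Finset.card_nsmul_le_sum bad1 _ _ ?_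
            intro ω hω
            rw [hbad1def] at hω
            have := (Finset.mem_filter.mp hω).2
            omega
        _ ≤ ∑ ω : Om I s q M, Dcount I s G q M ω :=
            Finset.sum_le_sum_of_subset (Finset.subset_univ _)
    have h2 : bad1.card * (2 * D + 1) ≤ D * Fintype.card (Om I s q M) :=
      le_trans h1 hsumD
    by_contra hcon
    push_neg at hcon
    have h3 : (2 * D + 1) * Fintype.card (Om I s q M) ≤
        (2 * D + 1) * (2 * bad1.card) := Nat.mul_le_mul_left _ hcon
    have h4 : (2 * D + 1) * (2 * bad1.card) = 2 * (bad1.card * (2 * D + 1)) := by ring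
    have h5 : 2 * (bad1.card * (2 * D + 1)) ≤ 2 * (D * Fintype.card (Om I s q M)) :=
      Nat.mul_le_mul_left _ h2
    have h6 : (2 * D + 1) * Fintype.card (Om I s q M) ≤
        2 * D * Fintype.card (Om I s q M) := by
      calc (2 * D + 1) * Fintype.card (Om I s q M) ≤ 2 * (D * Fintype.card (Om I s q M)) := by
            omega
        _ = 2 * D * Fintype.card (Om I s q M) := by ring
    have h7 : (2 * D + 1) * Fintype.card (Om I s q M) =
        2 * D * Fintype.card (Om I s q M) + Fintype.card (Om I s q M) := by ring
    omega
  set bad2 : Finset (Om I s q M) :=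
    Finset.univ.filter (fun ω : Om I s q M => ∃ B : ShapeTy I s,
      ∃ SS : ATy I → Finset (Fin M), (∀ a, M ≤ C * (SS a).card) ∧
        (hitsSet I s q M ω B SS).card ≤ W) with hbad2def
  clear_value bad2
  have hbad2 : 2 * bad2.card ≤ Fintype.card (Om I s q M) := by
    have h1 := bad2_le I s q M C W q1 KK hC hKK rfl hqQ hqpos
    rw [← hbad2def] at h1
    have hboxcard : Fintype.card (ATy I → Finset (Fin M)) = (2 ^ M) ^ nA := by
      rw [Fintype.card_fun, Fintype.card_finset, Fintype.card_fin]
    have hnum : 2 * (Fintype.card (ShapeTy I s) * Fintype.card (ATy I → Finset (Fin M)) *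
        ((W + 1) * q ^ W)) ≤ 2 ^ q1 := by
      rw [hcardShape, hboxcard]
      have hqW : q ^ W ≤ c5 ^ W * M ^ W := by
        calc q ^ W ≤ (c5 * M) ^ W := Nat.pow_le_pow_left hqc5 W
          _ = c5 ^ W * M ^ W := mul_pow _ _ _
      have hMW : M ^ W ≤ 2 ^ M := by
        calc M ^ W = 2 ^ (t * W) := by rw [hM, ← pow_mul]
          _ ≤ 2 ^ M := Nat.pow_le_pow_right (by omega) htW
      have hMle : M ≤ 2 ^ M := le_of_lt ((Nat.lt_two_pow_self (n := M)))
      have hmain : 2 * NB * ((W + 1) * q ^ W) ≤ 2 ^ (2 * M) := by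
        calc 2 * NB * ((W + 1) * q ^ W)
            ≤ 2 * NB * ((W + 1) * (c5 ^ W * M ^ W)) := by
              refine Nat.mul_le_mul_left _ (Nat.mul_le_mul_left _ hqW)
          _ = E0 * M ^ W := by rw [hE0]; ring
          _ ≤ M * 2 ^ M := Nat.mul_le_mul hE0M hMW
          _ ≤ 2 ^ M * 2 ^ M := Nat.mul_le_mul_right _ hMle
          _ = 2 ^ (2 * M) := by rw [← pow_add]; congr 1; ring
      calc 2 * (NB * (2 ^ M) ^ nA * ((W + 1) * q ^ W))
          = (2 ^ M) ^ nA * (2 * NB * ((W + 1) * q ^ W)) := by ring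
        _ ≤ (2 ^ M) ^ nA * 2 ^ (2 * M) := Nat.mul_le_mul_left _ hmain
        _ = 2 ^ (M * nA + 2 * M) := by rw [← pow_mul, ← pow_add]
        _ = 2 ^ q1 := by rw [hq1def]; congr 1; ring
    have h2 : 2 * bad2.card * 2 ^ q1 ≤ Fintype.card (Om I s q M) * 2 ^ q1 := by
      calc 2 * bad2.card * 2 ^ q1 = 2 * (bad2.card * 2 ^ q1) := by ring
        _ ≤ 2 * ((Fintype.card (ShapeTy I s) * Fintype.card (ATy I → Finset (Fin M)) *
              ((W + 1) * q ^ W)) * Fintype.card (Om I s q M)) := Nat.mul_le_mul_left _ h1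
        _ = (2 * (Fintype.card (ShapeTy I s) * Fintype.card (ATy I → Finset (Fin M)) *
              ((W + 1) * q ^ W))) * Fintype.card (Om I s q M) := by ring
        _ ≤ 2 ^ q1 * Fintype.card (Om I s q M) := Nat.mul_le_mul_right _ hnum
        _ = Fintype.card (Om I s q M) * 2 ^ q1 := by ring
    exact Nat.le_of_mul_le_mul_right h2 (Nat.pow_pos (by omega))
  -- a good ω exists
  have hgood : ∃ ω : Om I s q M, ω ∉ bad1 ∧ ω ∉ bad2 := by
    by_contra hcon
    push_neg at hcon
    have hsub : (Finset.univ : Finset (Om I s q M)) ⊆ bad1 ∪ bad2 := by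
      intro ω _
      rcases Classical.em (ω ∈ bad1) with h | h
      · exact Finset.mem_union_left _ h
      · exact Finset.mem_union_right _ (hcon ω h)
    have h1 : Fintype.card (Om I s q M) ≤ bad1.card + bad2.card := by
      calc Fintype.card (Om I s q M) = (Finset.univ : Finset (Om I s q M)).card :=
            Finset.card_univ.symm
        _ ≤ (bad1 ∪ bad2).card := Finset.card_le_card hsub
        _ ≤ bad1.card + bad2.card := Finset.card_union_le _ _
    omega
  obtain ⟨ω, hω1, hω2⟩ := hgood
  refine ⟨M, q, hMpos, ω, ?_⟩
  intro B SS hlarge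
  have hhits : W < (hitsSet I s q M ω B SS).card := by
    by_contra hcon
    push_neg at hcon
    apply hω2
    rw [hbad2def]
    exact Finset.mem_filter.mpr ⟨Finset.mem_univ _, B, SS, hlarge, hcon⟩
  have hDc : Dcount I s G q M ω ≤ 2 * D := by
    by_contra hcon
    push_neg at hcon
    apply hω1
    rw [hbad1def]
    exact Finset.mem_filter.mpr ⟨Finset.mem_univ _, hcon⟩
  have hdirty : (Dirty I s G q M ω).card ≤ W := by
    calc (Dirty I s G q M ω).card ≤ G * Dcount I s G q M ω := dirty_card_le I s G q M ω
      _ ≤ G * (2 * D) := Nat.mul_le_mul_left _ hDc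
      _ = W := by rw [hW]; ring
  have hexj : ∃ j ∈ hitsSet I s q M ω B SS, (B, j) ∉ Dirty I s G q M ω := by
    by_contra hcon
    push_neg at hcon
    have hinj : Set.InjOn (fun j => ((B, j) : PId I s q))
        ((hitsSet I s q M ω B SS) : Set (Fin q)) := by
      intro j1 _ j2 _ h
      exact (Prod.mk.injEq _ _ _ _).mp h |>.2
    have h1 : (hitsSet I s q M ω B SS).card ≤ (Dirty I s G q M ω).card :=
      Finset.card_le_card_of_injOn _ (fun j hj => hcon j hj) hinj
    omega
  obtain ⟨j, hj, hjD⟩ := hexj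
  refine ⟨(B, j), rfl, ?_, ?_⟩
  · rw [mem_Surv]
    have := hjD
    unfold Dirty at this
    rw [Finset.mem_filter] at this
    push_neg at this
    exact this (Finset.mem_univ _)
  · intro a
    have := (Finset.mem_filter.mp hj).2
    exact this a

end ExistsGood

/-- The main construction, for instances with nonempty active domain. -/
lemma main (SE : Schema) (I : Inst) (g s : ℕ) (P : Program)
    (hI : SE.IsInstance I) (hs : 0 < s) (hsg : s ≤ g)
    (hP : P.IsMDDLog SE) (hcf : P.constFree) (hbool : P.goalArity = 0)
    (hdiam : P.diameter ≤ s) (hA : (adom I).Nonempty) :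
    ∃ J : Inst, SE.IsInstance J ∧ HomTo J I ∧ DecompGirthGT J s g ∧
      (P.models I [] ↔ P.models J []) := by
  classical
  obtain ⟨M, q, hMpos, ω, hrich⟩ := exists_good I s (max g 2)
    (2 ^ ((P.IDB.erase P.goal).card)) (Nat.pow_pos (by omega))
    (le_max_right _ _) hs hA
  refine ⟨JJ I s (max g 2) q M ω, JJ_isInstance SE I s (max g 2) q M hI ω,
    ⟨_, JJ_hom I s (max g 2) q M ω⟩, ?_, ?_⟩
  · exact ⟨partfn I s (max g 2) q M ω,
      isDecomp I s (max g 2) q M ω (le_max_right _ _),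
      girthGT_mono (girthGT I s (max g 2) q M ω (le_max_right _ _)) (le_max_left _ _)⟩
  · constructor
    · intro h
      refine transfer SE I s (max g 2) q M P hI hP hcf hbool hdiam hs hA hMpos ω ?_ h
      intro B SS hl
      exact hrich B SS hl
    · intro h
      exact models_of_hom hcf (JJ_hom I s (max g 2) q M ω) h

end DDLogPaper.S9

section Statement9Assembly

open DDLogPaper

theorem statement_9' (SE : Schema) (I : Inst) (g s : ℕ) (P : Program)
    (hI : SE.IsInstance I) (hs : 0 < s) (hsg : s ≤ g)
    (hP : P.IsMDDLog SE) (hcf : P.constFree) (hbool : P.goalArity = 0)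
    (hdiam : P.diameter ≤ s) :
    ∃ J : Inst, SE.IsInstance J ∧ HomTo J I ∧ DecompGirthGT J s g ∧
      (P.models I [] ↔ P.models J []) := by
  by_cases hA : (adom I).Nonempty
  · exact S9.main SE I g s P hI hs hsg hP hcf hbool hdiam hA
  · have hAe : adom I = ∅ := Finset.not_nonempty_iff_eq_empty.mp hA
    refine ⟨I, hI, ⟨id, fun f hf => by simpa using hf⟩, ?_, Iff.rfl⟩
    refine ⟨fun _ => 0, ⟨?_, ?_⟩, ?_⟩
    · intro v _
      have h1 : adom (partInst I (fun _ => 0) v) ⊆ adom I :=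
        S9.adom_mono (Finset.filter_subset _ _)
      calc (adom (partInst I (fun _ => 0) v)).card ≤ (adom I).card :=
            Finset.card_le_card h1
        _ = 0 := by rw [hAe]; rfl
        _ ≤ s := Nat.zero_le s
    · intro v w hv hw hvw
      exfalso
      rcases Finset.mem_image.mp hv with ⟨_, _, rfl⟩
      rcases Finset.mem_image.mp hw with ⟨_, _, h⟩
      exact hvw h
    · rintro n hn ⟨hpos, f, p, p', hmem, hdist, hpp, hchain⟩
      have h0 := hmem 0 hpos
      rcases Finset.mem_image.mp h0 with ⟨v, hv, hf0⟩
      have hadom : adom (partInst I (fun _ => 0) v) = ∅ :=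
        Finset.subset_empty.mp (hAe ▸ S9.adom_mono (Finset.filter_subset _ _))
      have hlen : (f 0).args.length = 0 := by
        rw [← hf0]
        simp [hadom]
      have := (hpp 0 hpos).2.1
      omega

end Statement9Assembly

open DDLogPaper

/-- Lem. 5.4: the explosion lemma for MDDLog: every instance can be
replaced by one of high `(1,s)`-decomposition girth that maps into it and agrees with it
on any given Boolean MDDLog program of diameter at most `s`. -/
theorem statement_9 (SE : Schema) (I : Inst) (g s : ℕ) (P : Program)
    (hI : SE.IsInstance I) (hs : 0 < s) (hsg : s ≤ g)
    (hP : P.IsMDDLog SE) (hcf : P.constFree) (hbool : P.goalArity = 0)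
    (hdiam : P.diameter ≤ s) :
    ∃ J : Inst, SE.IsInstance J ∧ HomTo J I ∧ DecompGirthGT J s g ∧
      (P.models I [] ↔ P.models J []) := by
  exact statement_9' SE I g s P hI hs hsg hP hcf hbool hdiam
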